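/- arXiv:1112.0161 — 4 statements merged into one kernel-verified Lean document; each statement's English description precedes it below -/
import Mathlib

section
/- Let V be a vector space over a field and let Φ = (φ_1, ..., φ_M) be a finite family of vectors in V. Then the following are equivalent: (i) the index set {1,...,M} can be partitioned into k sets A_1,...,A_k such that for each i the subfamily (φ_j)_{j ∈ A_i} is linearly independent; (ii) for every subset J ⊆ {1,...,M}, the cardinality |J| is at most k times the dimension of the span of (φ_j)_{j ∈ J} (equivalently |J|/dim span(φ_j : j ∈ J) ≤ k). -/
open Submodule Set
set_option linter.unusedSectionVars false
set_option maxHeartbeats 2000000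
section
variable {K V : Type*} [Field K] [AddCommGroup V] [Module K V] {M : ℕ} {φ : Fin M → V}

private lemma rh_img {s c : Set (Fin M)} (hc : c ⊆ s) :
    φ '' c = (fun x : s => φ x) '' {x : s | ↑x ∈ c} := by
  ext w
  constructor
  · rintro ⟨x, hx, rfl⟩; exact ⟨⟨x, hc hx⟩, hx, rfl⟩
  · rintro ⟨⟨x, hxs⟩, hx, rfl⟩; exact ⟨x, hx, rfl⟩

private lemma rh_mono {s t : Set (Fin M)} (h : LinearIndependent K (fun x : t => φ x))
    (hst : s ⊆ t) : LinearIndependent K (fun x : s => φ x) :=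
  h.comp (Set.inclusion hst) (Set.inclusion_injective hst)

private lemma rh_inter {s a b : Set (Fin M)} (h : LinearIndependent K (fun x : s => φ x))
    (has : a ⊆ s) (hbs : b ⊆ s) {v : V} (hva : v ∈ span K (φ '' a))
    (hvb : v ∈ span K (φ '' b)) : v ∈ span K (φ '' (a ∩ b)) := by
  have hab : a = (a ∩ b) ∪ (a \ b) := by
    ext x; by_cases hx : x ∈ b <;> simp [hx]
  rw [hab, Set.image_union, Submodule.span_union, Submodule.mem_sup] at hva
  obtain ⟨u, hu, w, hw, rfl⟩ := hva
  have hwb : w ∈ span K (φ '' b) := by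
    have h1 : u ∈ span K (φ '' b) :=
      Submodule.span_mono (Set.image_mono (Set.inter_subset_right)) hu
    have := Submodule.sub_mem _ hvb h1
    simpa using this
  have hdisj : Disjoint (span K (φ '' (a \ b))) (span K (φ '' b)) := by
    rw [rh_img (Set.diff_subset.trans has), rh_img hbs]
    exact h.disjoint_span_image (by
      rw [Set.disjoint_left]; rintro ⟨x, hxs⟩ hx1 hx2
      exact hx1.2 hx2)
  have hw0 : w = 0 := by simpa using hdisj.le_bot ⟨hw, hwb⟩
  simpa [hw0] using hu

private lemma rh_exchange {s : Set (Fin M)} {y p : Fin M}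
    (h : LinearIndependent K (fun x : s => φ x)) (hy : y ∈ s)
    (hp1 : φ p ∈ span K (φ '' s)) (hp2 : φ p ∉ span K (φ '' (s \ {y}))) :
    LinearIndependent K (fun x : (insert p (s \ {y}) : Set (Fin M)) => φ x) ∧
      span K (φ '' (insert p (s \ {y}))) = span K (φ '' s) := by
  have hps : p ∉ s \ {y} := fun hmem => hp2 (subset_span ⟨p, hmem, rfl⟩)
  have hindep : LinearIndependent K (fun x : (s \ {y} : Set (Fin M)) => φ x) :=
    h.comp (Set.inclusion diff_subset) (Set.inclusion_injective _)
  have hsy : insert (φ y) (φ '' (s \ {y})) = φ '' s := by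
    rw [← Set.image_insert_eq, Set.insert_diff_singleton, Set.insert_eq_of_mem hy]
  refine ⟨(linearIndepOn_insert hps).2 ⟨hindep, hp2⟩, ?_⟩
  rw [Set.image_insert_eq]
  apply le_antisymm
  · rw [Submodule.span_le, Set.insert_subset_iff]
    exact ⟨hp1, (Set.image_mono diff_subset).trans subset_span⟩
  · rw [Submodule.span_le]
    rintro _ ⟨z, hz, rfl⟩
    by_cases hzy : z = y
    · subst hzy
      exact mem_span_insert_exchange (by rw [hsy]; exact hp1) hp2
    · exact subset_span (Set.mem_insert_of_mem _ ⟨z, ⟨hz, hzy⟩, rfl⟩)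

private lemma rh_pivot {A B : Finset (Fin M)}
    (h : LinearIndependent K (fun x : (A : Set (Fin M)) => φ x))
    (hBA : B ⊆ A) {v : V} (hvA : v ∈ span K (φ '' ↑A)) (hvB : v ∉ span K (φ '' ↑B)) :
    ∃ y ∈ A, y ∉ B ∧ v ∉ span K (φ '' (↑A \ {y})) := by
  classical
  set 𝒮 : Finset (Finset (Fin M)) :=
    A.powerset.filter (fun C => B ⊆ C ∧ v ∈ span K (φ '' ↑C)) with h𝒮
  have hA𝒮 : A ∈ 𝒮 := by simp [h𝒮, hBA, hvA]
  obtain ⟨C, hC, hmin⟩ := Finset.exists_min_image 𝒮 Finset.card ⟨A, hA𝒮⟩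
  simp only [h𝒮, Finset.mem_filter, Finset.mem_powerset] at hC
  obtain ⟨hCA, hBC, hvC⟩ := hC
  have hne : B ≠ C := fun hbc => hvB (hbc ▸ hvC)
  obtain ⟨y, hyC, hyB⟩ := Finset.exists_of_ssubset (lt_of_le_of_ne hBC hne)
  refine ⟨y, hCA hyC, hyB, fun hvAy => ?_⟩
  have hinter := rh_inter h (Finset.coe_subset.2 hCA) Set.diff_subset hvC hvAy
  have hCe : (↑C ∩ ((A : Set (Fin M)) \ {y})) = ↑(C.erase y) := by
    ext z
    simp only [Set.mem_inter_iff, Set.mem_diff, Set.mem_singleton_iff, Finset.coe_erase,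
      Finset.mem_coe]
    exact ⟨fun ⟨h1, _, h3⟩ => ⟨h1, h3⟩, fun ⟨h1, h3⟩ => ⟨h1, hCA h1, h3⟩⟩
  rw [hCe] at hinter
  have hmem𝒮 : C.erase y ∈ 𝒮 := by
    simp only [h𝒮, Finset.mem_filter, Finset.mem_powerset]
    exact ⟨(Finset.erase_subset _ _).trans hCA,
      fun b hb => Finset.mem_erase.2 ⟨fun hby => hyB (hby ▸ hb), hBC hb⟩, hinter⟩
  have := hmin _ hmem𝒮
  have hlt : (C.erase y).card < C.card := Finset.card_erase_lt_of_mem hyC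
  omega

private lemma rh_card {A : Finset (Fin M)}
    (h : LinearIndependent K (fun x : (A : Set (Fin M)) => φ x)) :
    A.card = Module.finrank K (span K (φ '' ↑A)) := by
  classical
  have hinj : Set.InjOn φ ↑A := fun x hx y hy hxy => by
    have := h.injective (a₁ := ⟨x, hx⟩) (a₂ := ⟨y, hy⟩) hxy
    exact congrArg Subtype.val this
  have himg : LinearIndependent K ((↑) : (φ '' ↑A : Set V) → V) :=
    LinearIndepOn.id_image h
  have hcoe : φ '' ↑A = ↑(A.image φ) := (Finset.coe_image).symm
  rw [hcoe] at himg ⊢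
  rw [finrank_span_finset_eq_card himg, Finset.card_image_of_injOn hinj]

private lemma rh_card_le {A J : Finset (Fin M)}
    (h : LinearIndependent K (fun x : (A : Set (Fin M)) => φ x))
    (hle : span K (φ '' ↑A) ≤ span K (φ '' ↑J)) :
    A.card ≤ Module.finrank K (span K (φ '' ↑J)) := by
  have : FiniteDimensional K (span K (φ '' (J : Set (Fin M)))) :=
    FiniteDimensional.span_of_finite K ((J.finite_toSet).image φ)
  rw [rh_card h]
  exact Submodule.finrank_mono hle

private lemma rh_multiswap {m : ℕ} : ∀ (A : Finset (Fin M)) (q y : ℕ → Fin M),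
    LinearIndependent K (fun x : (A : Set (Fin M)) => φ x) →
    (∀ j < m, y j ∈ A) →
    (∀ j < m, ∀ l < m, y j = y l → j = l) →
    (∀ j < m, q j ∉ A) →
    (∀ j < m, ∀ l < m, q j = q l → j = l) →
    (∀ j < m, φ (q j) ∈ span K (φ '' ↑A)) →
    (∀ j < m, φ (q j) ∉ span K (φ '' (↑A \ {y j}))) →
    (∀ l j, l < j → j < m → φ (q l) ∈ span K (φ '' (↑A \ {y j}))) →
    LinearIndependent K
        (fun x : ((↑A \ y '' Set.Iio m) ∪ q '' Set.Iio m : Set (Fin M)) => φ x) ∧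
      span K (φ '' ((↑A \ y '' Set.Iio m) ∪ q '' Set.Iio m)) = span K (φ '' ↑A) := by
  induction m with
  | zero =>
    intro A q y hA _ _ _ _ _ _ _
    have h0 : ((↑A \ y '' Set.Iio 0) ∪ q '' Set.Iio 0 : Set (Fin M)) = ↑A := by
      have : Set.Iio 0 = (∅ : Set ℕ) := by ext j; simp
      simp [this]
    rw [h0]
    exact ⟨hA, rfl⟩
  | succ m IH =>
    intro A q y hA hy hyinj hq hqinj hmem hpiv htri
    classical
    have h0m : 0 < m + 1 := Nat.succ_pos m
    set A' : Finset (Fin M) := insert (q 0) (A.erase (y 0)) with hA'def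
    have hcoeA' : (A' : Set (Fin M)) = insert (q 0) ((A : Set (Fin M)) \ {y 0}) := by
      simp [hA'def, Finset.coe_insert, Finset.coe_erase]
    obtain ⟨hA'ind, hA'span⟩ := by
      have := rh_exchange (φ := φ) hA (hy 0 h0m) (hmem 0 h0m) (hpiv 0 h0m)
      rwa [← hcoeA'] at this
    have hq0y : ∀ j, 0 < j → j < m + 1 → q 0 ≠ y j := by
      intro j hj hjm hqy
      exact hq 0 h0m (hqy ▸ hy j hjm)
    have hspanErase : ∀ j, 0 < j → j < m + 1 →
        span K (φ '' ((A' : Set (Fin M)) \ {y j})) =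
          span K (φ '' ((A : Set (Fin M)) \ {y j})) := by
      intro j hj hjm
      have hsplit : ((A' : Set (Fin M)) \ {y j}) =
          insert (q 0) (((A : Set (Fin M)) \ {y 0}) \ {y j}) := by
        rw [hcoeA']
        rw [Set.insert_diff_of_notMem _ (by simp [hq0y j hj hjm])]
      have hDsub : (((A : Set (Fin M)) \ {y 0}) \ {y j}) ⊆ (A : Set (Fin M)) \ {y j} :=
        fun z hz => ⟨hz.1.1, hz.2⟩
      have hy0ne : y 0 ≠ y j := fun h => Nat.lt_irrefl 0 (hyinj 0 h0m j hjm h ▸ hj)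
      have hins : insert (y 0) (((A : Set (Fin M)) \ {y 0}) \ {y j}) =
          (A : Set (Fin M)) \ {y j} := by
        ext z
        simp only [Set.mem_insert_iff, Set.mem_diff, Set.mem_singleton_iff]
        constructor
        · rintro (rfl | ⟨⟨h1, _⟩, h3⟩)
          · exact ⟨hy 0 h0m, hy0ne⟩
          · exact ⟨h1, h3⟩
        · rintro ⟨h1, h3⟩
          by_cases hz0 : z = y 0
          · exact Or.inl hz0
          · exact Or.inr ⟨⟨h1, hz0⟩, h3⟩
      rw [hsplit]
      apply le_antisymm
      · rw [Set.image_insert_eq, Submodule.span_le, Set.insert_subset_iff]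
        exact ⟨htri 0 j hj hjm, (Set.image_mono hDsub).trans subset_span⟩
      · rw [Submodule.span_le]
        rintro _ ⟨z, hz, rfl⟩
        by_cases hz0 : z = y 0
        · subst hz0
          rw [Set.image_insert_eq]
          apply mem_span_insert_exchange
          · rw [← Set.image_insert_eq, hins]
            exact htri 0 j hj hjm
          · intro hmemD
            exact hpiv 0 h0m (Submodule.span_mono
              (Set.image_mono Set.diff_subset) hmemD)
        · exact subset_span ⟨z, Set.mem_insert_of_mem _ ⟨⟨hz.1, hz0⟩, hz.2⟩, rfl⟩
    have key := IH A' (fun j => q (j + 1)) (fun j => y (j + 1))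
      hA'ind
      (fun j hj => by
        have h1 : y (j+1) ∈ A := hy (j+1) (by omega)
        have hne : y (j+1) ≠ y 0 := fun h => by
          have := hyinj (j+1) (by omega) 0 h0m h; omega
        simp [hA'def, Finset.mem_insert, Finset.mem_erase, hne, h1])
      (fun j hj l hl h => by
        have := hyinj (j+1) (by omega) (l+1) (by omega) h; omega)
      (fun j hj hmem' => by
        have hne : q (j+1) ≠ q 0 := fun h => by
          have := hqinj (j+1) (by omega) 0 h0m h; omega
        simp only [hA'def, Finset.mem_insert, Finset.mem_erase] at hmem'
        rcases hmem' with h | h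
        · exact hne h
        · exact hq (j+1) (by omega) h.2)
      (fun j hj l hl h => by
        have := hqinj (j+1) (by omega) (l+1) (by omega) h; omega)
      (fun j hj => by rw [hA'span]; exact hmem (j+1) (by omega))
      (fun j hj => by
        rw [hspanErase (j+1) (by omega) (by omega)]
        exact hpiv (j+1) (by omega))
      (fun l j hlj hjm => by
        rw [hspanErase (j+1) (by omega) (by omega)]
        exact htri (l+1) (j+1) (by omega) (by omega))
    have hset : (((A' : Set (Fin M)) \ (fun j => y (j+1)) '' Set.Iio m) ∪
        (fun j => q (j+1)) '' Set.Iio m) =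
        ((↑A \ y '' Set.Iio (m+1)) ∪ q '' Set.Iio (m+1)) := by
      rw [hcoeA']
      ext z
      simp only [Set.mem_union, Set.mem_diff, Set.mem_insert_iff, Set.mem_image,
        Set.mem_Iio, Set.mem_singleton_iff, Finset.mem_coe]
      constructor
      · rintro (⟨(rfl | ⟨hzA, hzy0⟩), hnY⟩ | ⟨j, hj, rfl⟩)
        · exact Or.inr ⟨0, by omega, rfl⟩
        · refine Or.inl ⟨hzA, ?_⟩
          rintro ⟨j, hj, rfl⟩
          rcases Nat.eq_zero_or_pos j with rfl | hj0
          · exact hzy0 rfl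
          · exact hnY ⟨j - 1, by omega, by congr 1; omega⟩
        · exact Or.inr ⟨j + 1, by omega, rfl⟩
      · rintro (⟨hzA, hnY⟩ | ⟨j, hj, rfl⟩)
        · refine Or.inl ⟨Or.inr ⟨hzA, fun h => hnY ⟨0, by omega, h.symm⟩⟩, ?_⟩
          rintro ⟨j, hj, rfl⟩
          exact hnY ⟨j + 1, by omega, rfl⟩
        · rcases Nat.eq_zero_or_pos j with rfl | hj0
          · exact Or.inl ⟨Or.inl rfl, by
              rintro ⟨l, hl, hql⟩
              exact hq 0 h0m (hql ▸ hy (l+1) (by omega))⟩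
          · exact Or.inr ⟨j - 1, by omega, by congr 1; omega⟩
    rw [hset] at key
    exact ⟨key.1, key.2.trans hA'span⟩
end

section
variable {K V : Type*} [Field K] [AddCommGroup V] [Module K V] {M : ℕ}

private lemma rh_extend {k : ℕ} (φ : Fin M → V)
    (H : ∀ J : Finset (Fin M), J.card ≤ k * Module.finrank K (span K (φ '' ↑J)))
    (S : Finset (Fin M)) (e : Fin M) (heS : e ∉ S) (f : Fin M → Fin k)
    (hf : ∀ i, LinearIndependent K
      (fun x : ((S.filter (fun j => f j = i)) : Set (Fin M)) => φ x)) :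
    ∃ f' : Fin M → Fin k, ∀ i, LinearIndependent K
      (fun x : (((insert e S).filter (fun j => f' j = i)) : Set (Fin M)) => φ x) := by
  classical
  set I : Fin k → Finset (Fin M) := fun i => S.filter (fun j => f j = i) with hI
  set Arc : Fin M → Fin M → Prop := fun x z => z ∈ S ∧
      φ x ∈ span K (φ '' ↑(I (f z))) ∧ φ x ∉ span K (φ '' (↑(I (f z)) \ {z})) with hArc
  set Addable : Fin M → Prop := fun x => ∃ i, φ x ∉ span K (φ '' ↑(I i)) with hAdd
  by_cases hex : ∃ t : ℕ, ∃ p : ℕ → Fin M,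
      p 0 = e ∧ (∀ s < t, Arc (p s) (p (s+1))) ∧ Addable (p t)
  · -- augmenting path exists: take a shortest one and reroute
    set Q : ℕ → Prop := fun t => ∃ p : ℕ → Fin M,
        p 0 = e ∧ (∀ s < t, Arc (p s) (p (s+1))) ∧ Addable (p t) with hQ
    have hexQ : ∃ t, Q t := hex
    set t₀ := Nat.find hexQ with ht₀def
    have hspec := Nat.find_spec hexQ
    rw [← ht₀def] at hspec
    obtain ⟨p, hp0, hparc, hpadd⟩ := hspec
    have hmin : ∀ t, t < t₀ → ¬ Q t := fun t ht =>
      Nat.find_min hexQ (by rw [← ht₀def]; exact ht)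
    have surgery : ∀ s₀ d, 1 ≤ d → s₀ + 1 + d ≤ t₀ → Arc (p s₀) (p (s₀ + 1 + d)) → False := by
      intro s₀ d hd hle harc
      refine hmin (t₀ - d) (by omega) ⟨fun n => if n ≤ s₀ then p n else p (n + d), ?_, ?_, ?_⟩
      · simp [hp0]
      · intro s hs
        rcases lt_trichotomy s s₀ with h | h | h
        · simp only [if_pos (le_of_lt h), if_pos (by omega : s + 1 ≤ s₀)]
          exact hparc s (by omega)
        · subst h
          simp only [if_pos le_rfl, if_neg (by omega : ¬ s + 1 ≤ s)]
          exact harc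
        · simp only [if_neg (by omega : ¬ s ≤ s₀), if_neg (by omega : ¬ s + 1 ≤ s₀)]
          have h1 : s + 1 + d = s + d + 1 := by omega
          rw [h1]
          exact hparc (s + d) (by omega)
      · simp only [if_neg (by omega : ¬ t₀ - d ≤ s₀)]
        have h1 : t₀ - d + d = t₀ := by omega
        rw [h1]; exact hpadd
    have pinj : ∀ a b, a ≤ t₀ → b ≤ t₀ → p a = p b → a = b := by
      have key : ∀ a b, a < b → b ≤ t₀ → p a = p b → False := by
        intro a b hab hb hpab
        rcases eq_or_lt_of_le hb with rfl | hblt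
        · exact hmin a (by omega) ⟨p, hp0, fun s hs => hparc s (by omega),
            by rw [hpab]; exact hpadd⟩
        · apply surgery a (b - a) (by omega) (by omega)
          have h1 : a + 1 + (b - a) = b + 1 := by omega
          rw [h1, hpab]
          exact hparc b hblt
      intro a b ha hb hpab
      rcases lt_trichotomy a b with h | h | h
      · exact (key a b h hb hpab).elim
      · exact h
      · exact (key b a h ha hpab.symm).elim
    have hshort : ∀ s u, s + 2 ≤ u → u ≤ t₀ → ¬ Arc (p s) (p u) := by
      intro s u h2 hu harc
      apply surgery s (u - s - 1) (by omega) (by omega)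
      have h1 : s + 1 + (u - s - 1) = u := by omega
      rw [h1]; exact harc
    have hpS : ∀ s, 1 ≤ s → s ≤ t₀ → p s ∈ S := by
      intro s h1 h2
      have h3 := hparc (s - 1) (by omega)
      have hs : s - 1 + 1 = s := by omega
      rw [hs] at h3
      exact h3.1
    obtain ⟨istar, histar⟩ := hpadd
    set f' : Fin M → Fin k := fun z => if z = p t₀ then istar
      else if h : ∃ s, s < t₀ ∧ p s = z then f (p (Nat.find h + 1)) else f z with hf'def
    have hf'p : ∀ s, s < t₀ → f' (p s) = f (p (s + 1)) := by
      intro s hs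
      have hne : p s ≠ p t₀ := fun h => by have := pinj s t₀ (by omega) le_rfl h; omega
      have hex2 : ∃ s', s' < t₀ ∧ p s' = p s := ⟨s, hs, rfl⟩
      have hfind : Nat.find hex2 = s := by
        have hspec2 := Nat.find_spec hex2
        exact pinj _ s (by omega) (by omega) hspec2.2
      simp only [hf'def]
      rw [if_neg hne, dif_pos hex2, hfind]
    have hf't : f' (p t₀) = istar := by simp [hf'def]
    have hf'off : ∀ z, (∀ s, s ≤ t₀ → p s ≠ z) → f' z = f z := by
      intro z hz
      have h1 : ¬ z = p t₀ := fun h => hz t₀ le_rfl h.symm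
      have h2 : ¬ ∃ s, s < t₀ ∧ p s = z := fun ⟨s, hs, hps⟩ => hz s (by omega) hps
      simp only [hf'def]
      rw [if_neg h1, dif_neg h2]
    refine ⟨f', ?_⟩
    intro i
    set P : Finset ℕ := (Finset.Icc 1 t₀).filter (fun s => f (p s) = i) with hPdef
    set m := P.card with hmdef
    set σ : Fin m ≃o {x // x ∈ P} := P.orderIsoOfFin rfl with hσ
    set sfun : ℕ → ℕ := fun j => if h : j < m then (σ ⟨j, h⟩ : ℕ) else 0 with hsfun
    have hsmemP : ∀ j, j < m → sfun j ∈ P := by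
      intro j hj
      simp only [hsfun, dif_pos hj]
      exact (σ ⟨j, hj⟩).2
    have hsstrict : ∀ j l, j < m → l < m → j < l → sfun j < sfun l := by
      intro j l hj hl hjl
      simp only [hsfun, dif_pos hj, dif_pos hl]
      have hlt : σ ⟨j, hj⟩ < σ ⟨l, hl⟩ := σ.lt_iff_lt.2 (Fin.mk_lt_mk.2 hjl)
      exact Subtype.coe_lt_coe.2 hlt
    have hsinj : ∀ j l, j < m → l < m → sfun j = sfun l → j = l := by
      intro j l hj hl h
      rcases lt_trichotomy j l with hc | hc | hc
      · have := hsstrict j l hj hl hc; omega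
      · exact hc
      · have := hsstrict l j hl hj hc; omega
    have hsurj : ∀ s ∈ P, ∃ j, ∃ h : j < m, sfun j = s := by
      intro s hs
      obtain ⟨j, hj⟩ := σ.surjective ⟨s, hs⟩
      refine ⟨j.1, j.2, ?_⟩
      simp only [hsfun, dif_pos j.2, Fin.eta]
      exact congrArg Subtype.val hj
    have hsrange : ∀ j, j < m → 1 ≤ sfun j ∧ sfun j ≤ t₀ ∧ f (p (sfun j)) = i := by
      intro j hj
      have h1 := hsmemP j hj
      simp only [hPdef, Finset.mem_filter, Finset.mem_Icc] at h1
      exact ⟨h1.1.1, h1.1.2, h1.2⟩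
    have hPmem : ∀ s, s ∈ P ↔ (1 ≤ s ∧ s ≤ t₀ ∧ f (p s) = i) := by
      intro s; simp [hPdef, Finset.mem_filter, Finset.mem_Icc, and_assoc]
    set yf : ℕ → Fin M := fun j => p (sfun j) with hyf
    set qf : ℕ → Fin M := fun j => p (sfun j - 1) with hqf
    have harcj : ∀ j, j < m → Arc (qf j) (yf j) := by
      intro j hj
      obtain ⟨h1, h2, h3⟩ := hsrange j hj
      have h4 := hparc (sfun j - 1) (by omega)
      have heq : sfun j - 1 + 1 = sfun j := by omega
      rw [heq] at h4
      exact h4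
    have hy' : ∀ j < m, yf j ∈ I i := by
      intro j hj
      obtain ⟨h1, h2, h3⟩ := hsrange j hj
      simp only [hI, Finset.mem_filter]
      exact ⟨hpS _ h1 h2, h3⟩
    have hyinj' : ∀ j < m, ∀ l < m, yf j = yf l → j = l := fun j hj l hl h =>
      hsinj j l hj hl (pinj _ _ (hsrange j hj).2.1 (hsrange l hl).2.1 h)
    have hmem' : ∀ j < m, φ (qf j) ∈ span K (φ '' ↑(I i)) := by
      intro j hj
      have h1 := (harcj j hj).2.1
      rwa [(hsrange j hj).2.2] at h1
    have hpiv' : ∀ j < m, φ (qf j) ∉ span K (φ '' (↑(I i) \ {yf j})) := by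
      intro j hj
      have h1 := (harcj j hj).2.2
      rwa [(hsrange j hj).2.2] at h1
    have hq' : ∀ j < m, qf j ∉ I i := by
      intro j hj hqA
      obtain ⟨h1, h2, h3⟩ := hsrange j hj
      apply hpiv' j hj
      apply subset_span
      refine ⟨qf j, ⟨hqA, ?_⟩, rfl⟩
      intro hqy
      rw [Set.mem_singleton_iff] at hqy
      have := pinj (sfun j - 1) (sfun j) (by omega) h2 hqy
      omega
    have hqinj' : ∀ j < m, ∀ l < m, qf j = qf l → j = l := by
      intro j hj l hl h
      have ha := (hsrange j hj)
      have hb := (hsrange l hl)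
      have h1 := pinj (sfun j - 1) (sfun l - 1) (by omega) (by omega) h
      exact hsinj j l hj hl (by omega)
    have htri' : ∀ l j, l < j → j < m → φ (qf l) ∈ span K (φ '' (↑(I i) \ {yf j})) := by
      intro l j hlj hjm
      have hlm : l < m := by omega
      have hns := hshort (sfun l - 1) (sfun j)
        (by
          have h1 := hsstrict l j hlm hjm hlj
          have h2 := (hsrange l hlm).1
          omega)
        (hsrange j hjm).2.1
      by_contra hc
      apply hns
      refine ⟨hpS _ (hsrange j hjm).1 (hsrange j hjm).2.1, ?_, ?_⟩
      · rw [(hsrange j hjm).2.2]; exact hmem' l hlm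
      · rw [(hsrange j hjm).2.2]; exact hc
    obtain ⟨hBind, hBspan⟩ := rh_multiswap (φ := φ) (m := m) (I i) qf yf (hf i)
      hy' hyinj' hq' hqinj' hmem' hpiv' htri'
    set Bset : Set (Fin M) := (↑(I i) \ yf '' Set.Iio m) ∪ qf '' Set.Iio m with hBset
    have hIimem : ∀ z, z ∈ ((I i : Finset (Fin M)) : Set (Fin M)) ↔ z ∈ S ∧ f z = i := by
      intro z; simp [hI]
    have hqmem : ∀ s, s ≤ t₀ → (p s ∈ qf '' Set.Iio m ↔ s + 1 ∈ P) := by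
      intro s hs
      constructor
      · rintro ⟨j, hj, hqj⟩
        rw [Set.mem_Iio] at hj
        have h1 := (hsrange j hj).1
        have h2 := (hsrange j hj).2.1
        have h3 := pinj (sfun j - 1) s (by omega) hs hqj
        have h4 : sfun j = s + 1 := by omega
        rw [← h4]; exact hsmemP j hj
      · intro hsP
        obtain ⟨j, hj, hsj⟩ := hsurj (s+1) hsP
        refine ⟨j, Set.mem_Iio.2 hj, ?_⟩
        show p (sfun j - 1) = p s
        rw [hsj]
        congr 1
    have hymem : ∀ s, s ≤ t₀ → (p s ∈ yf '' Set.Iio m ↔ s ∈ P) := by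
      intro s hs
      constructor
      · rintro ⟨j, hj, hyj⟩
        rw [Set.mem_Iio] at hj
        have h2 := (hsrange j hj).2.1
        have h3 := pinj (sfun j) s (by omega) hs hyj
        rw [← h3]; exact hsmemP j hj
      · intro hsP
        obtain ⟨j, hj, hsj⟩ := hsurj s hsP
        refine ⟨j, Set.mem_Iio.2 hj, ?_⟩
        show p (sfun j) = p s
        rw [hsj]
    have hzB : ∀ s, s ≤ t₀ → (p s ∈ Bset ↔ (s + 1 ≤ t₀ ∧ f (p (s + 1)) = i)) := by
      intro s hs
      simp only [hBset, Set.mem_union, Set.mem_diff]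
      constructor
      · rintro (⟨hA, hY⟩ | hQ)
        · exfalso
          rw [hIimem] at hA
          apply hY
          rw [hymem s hs, hPmem]
          have hs1 : 1 ≤ s := by
            by_contra h0
            have hz : s = 0 := by omega
            rw [hz, hp0] at hA
            exact heS hA.1
          exact ⟨hs1, hs, hA.2⟩
        · rw [hqmem s hs, hPmem] at hQ
          exact ⟨hQ.2.1, hQ.2.2⟩
      · rintro ⟨h1, h2⟩
        right
        rw [hqmem s hs, hPmem]
        exact ⟨by omega, h1, h2⟩
    have hoffB : ∀ z, (∀ s, s ≤ t₀ → p s ≠ z) →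
        (z ∈ Bset ↔ z ∈ ((I i : Finset (Fin M)) : Set (Fin M))) := by
      intro z hz
      simp only [hBset, Set.mem_union, Set.mem_diff]
      constructor
      · rintro (⟨hA, _⟩ | ⟨j, hj, hqj⟩)
        · exact hA
        · rw [Set.mem_Iio] at hj
          exact absurd hqj (hz _ (by have := (hsrange j hj).2.1; omega))
      · intro hA
        left
        refine ⟨hA, ?_⟩
        rintro ⟨j, hj, hyj⟩
        rw [Set.mem_Iio] at hj
        exact hz _ (hsrange j hj).2.1 hyj
    have hLHS : ∀ z, z ∈ (((insert e S).filter (fun j => f' j = i)) : Set (Fin M)) ↔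
        ((z = e ∨ z ∈ S) ∧ f' z = i) := by
      intro z
      simp [Finset.mem_filter, Finset.mem_insert]
    have hfirst : p t₀ = e ∨ p t₀ ∈ S := by
      rcases Nat.eq_zero_or_pos t₀ with h0 | h0
      · left; rw [h0, hp0]
      · right; exact hpS t₀ h0 le_rfl
    have hptB : p t₀ ∉ Bset := by
      intro h
      rw [hzB t₀ le_rfl] at h
      omega
    by_cases hii : i = istar
    · have hsetEq : (((insert e S).filter (fun j => f' j = i)) : Set (Fin M)) =
          insert (p t₀) Bset := by
        ext z
        rw [hLHS, Set.mem_insert_iff]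
        by_cases hzpath : ∃ s, s ≤ t₀ ∧ p s = z
        · obtain ⟨s, hs, rfl⟩ := hzpath
          rcases eq_or_lt_of_le hs with heq | hslt
          · subst heq
            constructor
            · intro _; exact Or.inl rfl
            · intro _; exact ⟨hfirst, by rw [hf't, hii]⟩
          · have hne : p s ≠ p t₀ := fun h => by
              have := pinj s t₀ (by omega) le_rfl h; omega
            have hfp := hf'p s hslt
            constructor
            · rintro ⟨-, hfz⟩
              right
              rw [hzB s (by omega)]
              exact ⟨by omega, by rw [← hfp]; exact hfz⟩
            · rintro (h | hB)
              · exact absurd h hne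
              · rw [hzB s (by omega)] at hB
                refine ⟨?_, by rw [hfp]; exact hB.2⟩
                rcases Nat.eq_zero_or_pos s with h0 | h0
                · left; rw [h0, hp0]
                · right; exact hpS s h0 (by omega)
        · push_neg at hzpath
          have hzne : z ≠ p t₀ := fun h => hzpath t₀ le_rfl h.symm
          have hze : z ≠ e := fun h => hzpath 0 (by omega) (by rw [hp0, h])
          rw [hf'off z hzpath, hoffB z hzpath, hIimem]
          constructor
          · rintro ⟨h1, h2⟩
            rcases h1 with rfl | h1
            · exact absurd rfl hze
            · exact Or.inr ⟨h1, h2⟩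
          · rintro (h | ⟨h1, h2⟩)
            · exact absurd h hzne
            · exact ⟨Or.inr h1, h2⟩
      rw [hsetEq]
      refine (linearIndepOn_insert hptB).2 ⟨hBind, ?_⟩
      rw [hBspan]
      rw [hii]
      exact histar
    · have hsetEq : (((insert e S).filter (fun j => f' j = i)) : Set (Fin M)) = Bset := by
        ext z
        rw [hLHS]
        by_cases hzpath : ∃ s, s ≤ t₀ ∧ p s = z
        · obtain ⟨s, hs, rfl⟩ := hzpath
          rcases eq_or_lt_of_le hs with heq | hslt
          · subst heq
            constructor
            · rintro ⟨-, hfz⟩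
              rw [hf't] at hfz
              exact absurd hfz.symm hii
            · intro h
              exact absurd h hptB
          · have hfp := hf'p s hslt
            constructor
            · rintro ⟨-, hfz⟩
              rw [hzB s (by omega)]
              exact ⟨by omega, by rw [← hfp]; exact hfz⟩
            · intro hB
              rw [hzB s (by omega)] at hB
              refine ⟨?_, by rw [hfp]; exact hB.2⟩
              rcases Nat.eq_zero_or_pos s with h0 | h0
              · left; rw [h0, hp0]
              · right; exact hpS s h0 (by omega)
        · push_neg at hzpath
          have hze : z ≠ e := fun h => hzpath 0 (by omega) (by rw [hp0, h])
          rw [hf'off z hzpath, hoffB z hzpath, hIimem]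
          constructor
          · rintro ⟨h1, h2⟩
            rcases h1 with rfl | h1
            · exact absurd rfl hze
            · exact ⟨h1, h2⟩
          · rintro ⟨h1, h2⟩
            exact ⟨Or.inr h1, h2⟩
      rw [hsetEq]
      exact hBind

  · -- no augmenting path: contradiction with H
    exfalso
    set T : Finset (Fin M) := Finset.univ.filter (fun x => Relation.ReflTransGen Arc e x) with hT
    have heT : e ∈ T := by
      simp only [hT, Finset.mem_filter, Finset.mem_univ, true_and]
      exact Relation.ReflTransGen.refl
    have hclosed : ∀ x ∈ T, ∀ y, Arc x y → y ∈ T := by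
      intro x hx y hxy
      simp only [hT, Finset.mem_filter, Finset.mem_univ, true_and] at hx ⊢
      exact hx.tail hxy
    have hpath : ∀ x, Relation.ReflTransGen Arc e x → ∃ t : ℕ, ∃ p : ℕ → Fin M,
        p 0 = e ∧ (∀ s < t, Arc (p s) (p (s+1))) ∧ p t = x := by
      intro x hx
      induction hx with
      | refl => exact ⟨0, fun _ => e, rfl, by omega, rfl⟩
      | @tail b c hab hbc ih =>
        obtain ⟨t, p, hp0, hparc, hpt⟩ := ih
        refine ⟨t + 1, fun n => if n ≤ t then p n else c, by simp [hp0], ?_, ?_⟩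
        · intro s hs
          rcases Nat.lt_or_ge s t with h | h
          · simp only [if_pos (le_of_lt h), if_pos (by omega : s + 1 ≤ t)]
            exact hparc s h
          · have hst : s = t := by omega
            subst hst
            simp only [if_pos le_rfl, if_neg (by omega : ¬ s + 1 ≤ s), hpt]
            exact hbc
        · simp
    have hnoadd : ∀ x ∈ T, ∀ i, φ x ∈ span K (φ '' ↑(I i)) := by
      intro x hx i
      by_contra hc
      simp only [hT, Finset.mem_filter, Finset.mem_univ, true_and] at hx
      obtain ⟨t, p, hp0, hparc, hpt⟩ := hpath x hx
      exact hex ⟨t, p, hp0, hparc, ⟨i, hpt ▸ hc⟩⟩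
    have hTspan : ∀ x ∈ T, ∀ i, φ x ∈ span K (φ '' ↑(I i ∩ T)) := by
      intro x hx i
      by_contra hc
      obtain ⟨y, hyI, hyIT, hyspan⟩ := rh_pivot (hf i) (Finset.inter_subset_left (s₂ := T))
        (hnoadd x hx i) hc
      have hfy : f y = i := by
        simp only [hI, Finset.mem_filter] at hyI; exact hyI.2
      have harc : Arc x y := by
        refine ⟨by simp only [hI, Finset.mem_filter] at hyI; exact hyI.1, ?_, ?_⟩ <;>
          rw [hfy]
        · exact hnoadd x hx i
        · exact hyspan
      exact hyIT (Finset.mem_inter.2 ⟨hyI, hclosed x hx y harc⟩)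
    have hITsub : ∀ i, ((I i ∩ T : Finset (Fin M)) : Set (Fin M)) ⊆ (T : Set (Fin M)) := by
      intro i z hz
      simp only [Finset.coe_inter, Set.mem_inter_iff] at hz
      exact hz.2
    have finT : FiniteDimensional K (span K (φ '' (T : Set (Fin M)))) :=
      FiniteDimensional.span_of_finite K ((T.finite_toSet).image φ)
    have hcard_i : ∀ i, (I i ∩ T).card = Module.finrank K (span K (φ '' (T : Set (Fin M)))) := by
      intro i
      rw [rh_card (rh_mono (hf i) (by
        intro z hz
        simp only [Finset.coe_inter, Set.mem_inter_iff] at hz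
        exact hz.1))]
      apply le_antisymm
      · exact Submodule.finrank_mono (Submodule.span_mono (Set.image_mono (hITsub i)))
      · have hle : span K (φ '' (T : Set (Fin M))) ≤ span K (φ '' ↑(I i ∩ T)) := by
          rw [Submodule.span_le]
          rintro _ ⟨z, hz, rfl⟩
          exact hTspan z hz i
        have : FiniteDimensional K (span K (φ '' ((I i ∩ T : Finset (Fin M)) : Set (Fin M)))) :=
          FiniteDimensional.span_of_finite K (((I i ∩ T).finite_toSet).image φ)
        exact Submodule.finrank_mono hle
    -- counting
    have hdisj : ∀ i ∈ Finset.univ (α := Fin k), ∀ j ∈ Finset.univ (α := Fin k), i ≠ j →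
        Disjoint (I i ∩ T) (I j ∩ T) := by
      intro i _ j _ hij
      rw [Finset.disjoint_left]
      intro a hai haj
      simp only [hI, Finset.mem_inter, Finset.mem_filter] at hai haj
      exact hij (hai.1.2 ▸ haj.1.2 ▸ rfl)
    have hsubset : Finset.univ.biUnion (fun i => I i ∩ T) ⊆ T.erase e := by
      intro x hx
      simp only [Finset.mem_biUnion] at hx
      obtain ⟨i, _, hxi⟩ := hx
      simp only [hI, Finset.mem_inter, Finset.mem_filter] at hxi
      exact Finset.mem_erase.2 ⟨fun hxe => heS (hxe ▸ hxi.1.1), hxi.2⟩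
    have hsum : k * Module.finrank K (span K (φ '' (T : Set (Fin M)))) ≤ T.card - 1 := by
      calc k * Module.finrank K (span K (φ '' (T : Set (Fin M))))
          = ∑ i : Fin k, (I i ∩ T).card := by
            rw [Finset.sum_congr rfl (fun i _ => hcard_i i), Finset.sum_const,
              Finset.card_univ, Fintype.card_fin, smul_eq_mul]
        _ = (Finset.univ.biUnion (fun i => I i ∩ T)).card :=
            (Finset.card_biUnion hdisj).symm
        _ ≤ (T.erase e).card := Finset.card_le_card hsubset
        _ = T.card - 1 := Finset.card_erase_of_mem heT
    have hHT := H T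
    have hTpos : 1 ≤ T.card := Finset.card_pos.2 ⟨e, heT⟩
    omega

end

/-- **Rado–Horn theorem.**  A finite family of vectors `φ : Fin M → V` can be
partitioned into `k` linearly independent subfamilies if and only if every
subset `J` of the index set satisfies `|J| ≤ k · dim span (φ j : j ∈ J)`. -/
theorem rado_horn {K V : Type*} [Field K] [AddCommGroup V] [Module K V]
    {M : ℕ} (k : ℕ) (φ : Fin M → V) :
    (∃ f : Fin M → Fin k, ∀ i : Fin k,
        LinearIndependent K (fun x : {j : Fin M // f j = i} => φ x.1)) ↔
      (∀ J : Finset (Fin M),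
        J.card ≤ k * Module.finrank K (Submodule.span K (φ '' ↑J))) := by
  classical
  constructor
  · rintro ⟨f, hf⟩ J
    have hJ : J.card = ∑ i : Fin k, (J.filter (fun j => f j = i)).card :=
      Finset.card_eq_sum_card_fiberwise (fun x _ => Finset.mem_univ (f x))
    have hbound : ∀ i : Fin k, (J.filter (fun j => f j = i)).card ≤
        Module.finrank K (span K (φ '' ↑J)) := by
      intro i
      apply rh_card_le (φ := φ)
      · have hmap : ∀ x : ((J.filter (fun j => f j = i) : Finset (Fin M)) : Set (Fin M)),
            f x.1 = i := fun x => (Finset.mem_filter.1 (Finset.mem_coe.1 x.2)).2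
        exact (hf i).comp
          (fun x => ⟨x.1, hmap x⟩)
          (fun a b hab => Subtype.ext (by simpa using congrArg Subtype.val hab))
      · apply Submodule.span_mono
        apply Set.image_mono
        intro z hz
        exact Finset.mem_coe.2 (Finset.mem_filter.1 (Finset.mem_coe.1 hz)).1
    calc J.card = ∑ i : Fin k, (J.filter (fun j => f j = i)).card := hJ
      _ ≤ ∑ _i : Fin k, Module.finrank K (span K (φ '' ↑J)) :=
          Finset.sum_le_sum (fun i _ => hbound i)
      _ = k * Module.finrank K (span K (φ '' ↑J)) := by
          rw [Finset.sum_const, Finset.card_univ, Fintype.card_fin, smul_eq_mul]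
  · intro H
    have key : ∀ S : Finset (Fin M), ∃ f : Fin M → Fin k, ∀ i,
        LinearIndependent K (fun x : ((S.filter (fun j => f j = i)) : Set (Fin M)) => φ x) := by
      intro S
      induction S using Finset.induction_on with
      | empty =>
        rcases Nat.eq_zero_or_pos k with hk | hk
        · subst hk
          rcases Nat.eq_zero_or_pos M with hM | hM
          · subst hM
            exact ⟨fun z => z.elim0, fun i => i.elim0⟩
          · exfalso
            have := H {⟨0, hM⟩}
            simp at this
        · refine ⟨fun _ => ⟨0, hk⟩, fun i => ?_⟩
          rw [Finset.filter_empty]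
          have : IsEmpty ((↑(∅ : Finset (Fin M)) : Set (Fin M))) := by
            simp only [Finset.coe_empty]
            exact Set.instIsEmptyElemEmptyCollection (Fin M)
          exact linearIndependent_empty_type
      | @insert a S haS ih =>
        obtain ⟨f, hfS⟩ := ih
        exact rh_extend φ H S a haS f hfS
    obtain ⟨f, hfu⟩ := key Finset.univ
    refine ⟨f, fun i => ?_⟩
    have hmap : ∀ x : {j : Fin M // f j = i},
        x.1 ∈ ((Finset.univ.filter (fun j => f j = i) : Finset (Fin M)) : Set (Fin M)) :=
      fun x => Finset.mem_coe.2 (Finset.mem_filter.2 ⟨Finset.mem_univ _, x.2⟩)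
    exact (hfu i).comp
      (fun x => ⟨x.1, hmap x⟩)
      (fun a b hab => Subtype.ext (by simpa using congrArg Subtype.val hab))
end

section
/- Let Φ = (φ_1,...,φ_M) be a finite family of vectors in a vector space V. An ordered partition F = {F_1,...,F_ℓ} of Φ into linearly independent sets is a fundamental partition if and only if for every other ordered partition {P_1,...,P_k} of Φ into linearly independent sets one has (i) ℓ ≤ k, and (ii) for every j = 1,...,ℓ, the partial sum |P_1| + ... + |P_j| ≤ |F_1| + ... + |F_j| (that is, the size sequence of F majorizes the size sequence of every ordered partition of Φ into linearly independent sets). -/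
/-- The sequence of part sizes of a partition `F : Fin ℓ → Finset (Fin M)`,
padded with zeros. -/
def PartSizes {M ℓ : ℕ} (F : Fin ℓ → Finset (Fin M)) : ℕ → ℕ :=
  fun n => if h : n < ℓ then (F ⟨n, h⟩).card else 0

/-- Lexicographic order on sequences of naturals: `a ≤ₗₑₓ b`. -/
def LexLE (a b : ℕ → ℕ) : Prop :=
  a = b ∨ ∃ n, (∀ m < n, a m = b m) ∧ a n < b n

/-- `F : Fin ℓ → Finset (Fin M)` is an ordered partition of the index set `Ω`
into sets indexing linearly independent subfamilies of `φ`: the parts are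
nonempty, pairwise disjoint, cover `Ω`, each part indexes a linearly
independent subfamily, and the part sizes are non-increasing. -/
def IsOrderedLIPartitionOn (K : Type*) {V : Type*} [Field K] [AddCommGroup V] [Module K V]
    {M ℓ : ℕ} (φ : Fin M → V) (Ω : Finset (Fin M)) (F : Fin ℓ → Finset (Fin M)) : Prop :=
  (∀ i, (F i).Nonempty) ∧
  (∀ i j, i ≠ j → Disjoint (F i) (F j)) ∧
  (Finset.univ.biUnion F = Ω) ∧
  (∀ i, LinearIndependent K (fun x : {y : Fin M // y ∈ F i} => φ x.1)) ∧
  (∀ i j : Fin ℓ, i ≤ j → (F j).card ≤ (F i).card)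

/-- A fundamental partition of the subfamily of `φ` indexed by `Ω`: an ordered
partition into linearly independent sets whose size sequence is
lexicographically maximal among all such ordered partitions. -/
def IsFundamentalOn (K : Type*) {V : Type*} [Field K] [AddCommGroup V] [Module K V]
    {M ℓ : ℕ} (φ : Fin M → V) (Ω : Finset (Fin M)) (F : Fin ℓ → Finset (Fin M)) : Prop :=
  IsOrderedLIPartitionOn K φ Ω F ∧
  ∀ (k : ℕ) (P : Fin k → Finset (Fin M)),
    IsOrderedLIPartitionOn K φ Ω P → LexLE (PartSizes P) (PartSizes F)


open Finset Submodule

def Ind (K : Type*) {V : Type*} [Field K] [AddCommGroup V] [Module K V]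
    {M : ℕ} (φ : Fin M → V) (S : Finset (Fin M)) : Prop :=
  LinearIndependent K (fun x : {y : Fin M // y ∈ S} => φ x.1)

def Spn (K : Type*) {V : Type*} [Field K] [AddCommGroup V] [Module K V]
    {M : ℕ} (φ : Fin M → V) (S : Finset (Fin M)) : Submodule K V :=
  Submodule.span K (φ '' ↑S)

section Basics
variable {K V : Type*} [Field K] [AddCommGroup V] [Module K V]
variable {M : ℕ} {φ : Fin M → V}

lemma ind_coe {S : Finset (Fin M)} :
    Ind K φ S ↔ LinearIndependent K (fun x : (↑S : Set (Fin M)) => φ x) := Iff.rfl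

lemma ind_iff {S : Finset (Fin M)} :
    Ind K φ S ↔ ∀ l ∈ Finsupp.supported K K (↑S : Set (Fin M)),
      Finsupp.linearCombination K φ l = 0 → l = 0 := by
  rw [ind_coe]
  exact linearIndepOn_iff

lemma spn_mono {S T : Finset (Fin M)} (h : S ⊆ T) : Spn K φ S ≤ Spn K φ T :=
  span_mono (Set.image_mono (by exact_mod_cast h))

lemma mem_spn {S : Finset (Fin M)} {x : Fin M} (hx : x ∈ S) : φ x ∈ Spn K φ S :=
  subset_span ⟨x, by simpa using hx⟩

lemma ind_mono {S T : Finset (Fin M)} (h : S ⊆ T) (hT : Ind K φ T) : Ind K φ S := by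
  rw [ind_iff] at *
  intro l hl h0
  exact hT l (Finsupp.supported_mono (by exact_mod_cast h) hl) h0

lemma ind_empty : Ind K φ (∅ : Finset (Fin M)) := by
  rw [ind_iff]
  intro l hl _
  simpa [Finsupp.mem_supported, Finsupp.support_eq_empty] using hl

lemma ind_insert {S : Finset (Fin M)} {x : Fin M} (hS : Ind K φ S)
    (hx : φ x ∉ Spn K φ S) : Ind K φ (insert x S) := by
  by_cases hxS : x ∈ S
  · exact absurd (mem_spn hxS) hx
  · rw [ind_coe]
    have : ((insert x S : Finset (Fin M)) : Set (Fin M)) = insert x ↑S := by push_cast; rfl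
    rw [show (fun y : ((insert x S : Finset (Fin M)) : Set (Fin M)) => φ y)
        = fun y : ((insert x S : Finset (Fin M)) : Set (Fin M)) => φ y from rfl]
    have h2 := (linearIndepOn_insert (s := (↑S : Set (Fin M))) (a := x) (f := φ)
      (by exact_mod_cast hxS)).2 ⟨hS, hx⟩
    exact (linearIndependent_equiv (Equiv.setCongr (by push_cast; rfl))).mpr h2

lemma ind_not_mem_span_erase {S : Finset (Fin M)} {y : Fin M} (hS : Ind K φ S) (hy : y ∈ S) :
    φ y ∉ Spn K φ (S.erase y) := by
  have hSe : S = insert y (S.erase y) := (Finset.insert_erase hy).symm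
  have h1 : Ind K φ (insert y (S.erase y)) := hSe ▸ hS
  have h2 : LinearIndependent K (fun x : (insert y ↑(S.erase y) : Set (Fin M)) => φ x) := by
    refine (linearIndependent_equiv (Equiv.setCongr ?_)).mp h1
    exact Finset.coe_insert y (S.erase y)
  exact ((linearIndepOn_insert (by simp) ).1 h2).2

lemma ind_pair_injOn {S : Finset (Fin M)} (hS : Ind K φ S) {x y : Fin M}
    (hx : x ∈ S) (hy : y ∈ S) (hxy : φ x = φ y) : x = y := by
  by_contra hne
  have := ind_not_mem_span_erase hS hy
  exact this (hxy ▸ mem_spn (Finset.mem_erase.2 ⟨hne, hx⟩))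

/-- Steinitz: more independent vectors cannot all lie in the span of fewer. -/
lemma ind_card_le_of_subset_spn {S T : Finset (Fin M)} (hT : Ind K φ T)
    (h : ∀ x ∈ T, φ x ∈ Spn K φ S) : T.card ≤ S.card := by
  classical
  have hW : FiniteDimensional K (Spn K φ S) := by
    rw [Spn, ← Finset.coe_image]
    infer_instance
  have hind : LinearIndependent K (fun x : {y : Fin M // y ∈ T} =>
      (⟨φ x.1, h x.1 x.2⟩ : Spn K φ S)) :=
    LinearIndependent.of_comp (Spn K φ S).subtype hT
  have h1 : T.card ≤ Module.finrank K (Spn K φ S) := by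
    have := hind.fintype_card_le_finrank
    simpa [Fintype.card_coe] using this
  refine h1.trans ?_
  have h2 : Spn K φ S = Submodule.span K (↑(S.image φ) : Set V) := by
    rw [Spn, Finset.coe_image]
  rw [h2]
  exact le_trans (finrank_span_finset_le_card _) (Finset.card_image_le)

end Basics

section Exchange
variable {K V : Type*} [Field K] [AddCommGroup V] [Module K V]
variable {M : ℕ} {φ : Fin M → V}

lemma spn_union_le {S T U : Finset (Fin M)} (hS : Spn K φ S ≤ Spn K φ U)
    (hT : Spn K φ T ≤ Spn K φ U) : Spn K φ (S ∪ T) ≤ Spn K φ U := by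
  rw [Spn, Submodule.span_le]
  rintro v ⟨a, ha, rfl⟩
  rcases Finset.mem_union.1 (by exact_mod_cast ha) with h | h
  · exact hS (mem_spn h)
  · exact hT (mem_spn h)

lemma spn_le_of_forall {S : Finset (Fin M)} {W : Submodule K V}
    (h : ∀ a ∈ S, φ a ∈ W) : Spn K φ S ≤ W := by
  rw [Spn, Submodule.span_le]
  rintro v ⟨a, ha, rfl⟩
  exact h a (by exact_mod_cast ha)

lemma spn_image_eq {S : Finset (Fin M)} {a : Fin M} (ha : a ∈ S) :
    (φ '' ↑S : Set V) = insert (φ a) (φ '' ↑(S.erase a)) := by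
  conv_lhs => rw [← Finset.insert_erase ha]
  push_cast
  exact Set.image_insert_eq

/-- Swap `y` out for `x`: independence, span and cardinality are preserved. -/
lemma swap_step {A : Finset (Fin M)} {x y : Fin M} (hA : Ind K φ A) (hy : y ∈ A) (hxA : x ∉ A)
    (hx1 : φ x ∈ Spn K φ A) (hx2 : φ x ∉ Spn K φ (A.erase y)) :
    Ind K φ (insert x (A.erase y)) ∧ Spn K φ (insert x (A.erase y)) = Spn K φ A ∧
      (insert x (A.erase y)).card = A.card := by
  have hindep : Ind K φ (insert x (A.erase y)) :=
    ind_insert (ind_mono (Finset.erase_subset _ _) hA) hx2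
  refine ⟨hindep, le_antisymm ?_ ?_, ?_⟩
  · refine spn_le_of_forall ?_
    intro a ha
    rcases Finset.mem_insert.1 ha with rfl | ha
    · exact hx1
    · exact mem_spn (Finset.mem_of_mem_erase ha)
  · refine spn_le_of_forall ?_
    intro a ha
    by_cases hay : a = y
    · subst hay
      have h1 : φ x ∈ Submodule.span K (insert (φ a) (φ '' ↑(A.erase a))) := by
        rw [← spn_image_eq ha]; exact hx1
      have h2 : φ a ∈ Submodule.span K (insert (φ x) (φ '' ↑(A.erase a))) :=
        mem_span_insert_exchange h1 hx2
      have : (insert (φ x) (φ '' ↑(A.erase a)) : Set V) = φ '' ↑(insert x (A.erase a)) := by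
        push_cast; rw [Set.image_insert_eq]
      rwa [this] at h2
    · exact mem_spn (Finset.mem_insert_of_mem (Finset.mem_erase.2 ⟨hay, ha⟩))
  · rw [Finset.card_insert_of_notMem (fun hc => hxA (Finset.mem_of_mem_erase hc)),
      Finset.card_erase_of_mem hy]
    have : 1 ≤ A.card := Finset.card_pos.2 ⟨y, hy⟩
    omega

/-- if `φ v` is in the span of `S` but not of `S ∩ R`, there is a "support" element
outside `R` whose removal kills membership. -/
lemma exists_erase_not_mem_spn {S R : Finset (Fin M)} {v : Fin M} (hS : Ind K φ S)
    (h1 : φ v ∈ Spn K φ S) (h2 : φ v ∉ Spn K φ (S.filter (· ∈ R))) :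
    ∃ y ∈ S, y ∉ R ∧ φ v ∉ Spn K φ (S.erase y) := by
  classical
  rw [Spn, Finsupp.mem_span_image_iff_linearCombination] at h1
  obtain ⟨l, hl, hlv⟩ := h1
  rw [Finsupp.mem_supported] at hl
  by_cases hsup : ∀ a ∈ l.support, a ∈ R
  · exfalso
    apply h2
    rw [Spn, Finsupp.mem_span_image_iff_linearCombination]
    refine ⟨l, ?_, hlv⟩
    rw [Finsupp.mem_supported]
    intro a ha
    have haS : a ∈ S := by exact_mod_cast hl ha
    simpa using ⟨haS, hsup a ha⟩
  · push_neg at hsup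
    obtain ⟨a, ha, haR⟩ := hsup
    have haS : a ∈ S := by exact_mod_cast hl ha
    refine ⟨a, haS, haR, ?_⟩
    intro hmem
    rw [Spn, Finsupp.mem_span_image_iff_linearCombination] at hmem
    obtain ⟨l', hl', hl'v⟩ := hmem
    rw [Finsupp.mem_supported] at hl'
    have hdiff : l - l' ∈ Finsupp.supported K K (↑S : Set (Fin M)) := by
      rw [Finsupp.mem_supported]
      refine Set.Subset.trans (Finsupp.support_sub (ι := Fin M)) ?_
      intro b hb
      rcases Finset.mem_union.1 (by exact_mod_cast hb) with h | h
      · exact_mod_cast hl h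
      · have := hl' h
        simp only [Finset.coe_erase, Set.mem_diff] at this
        exact this.1
    have hzero : Finsupp.linearCombination K φ (l - l') = 0 := by
      rw [map_sub, hlv, hl'v, sub_self]
    have := (ind_iff.1 hS) _ hdiff hzero
    have hla : l a = l' a := by
      have := sub_eq_zero.1 (by rw [← Finsupp.sub_apply, this]; rfl : l a - l' a = 0)
      exact this
    have : a ∈ S.erase a := by
      have haa : a ∈ l'.support := by
        rw [Finsupp.mem_support_iff] at ha ⊢
        rwa [← hla]
      exact_mod_cast hl' haa
    simp at this

end Exchange

section Tri
variable {K V : Type*} [Field K] [AddCommGroup V] [Module K V]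
variable {M : ℕ} {φ : Fin M → V}

/-- Triangular multi-exchange: simultaneously swap out `y t` for `x t`, `t ∈ T`. -/
lemma tri (n : ℕ) : ∀ (T : Finset ℕ) (A : Finset (Fin M)) (x y : ℕ → Fin M),
    T.card = n → Ind K φ A →
    (∀ t ∈ T, y t ∈ A) →
    (∀ t ∈ T, x t ∉ A) →
    (∀ t ∈ T, ∀ t' ∈ T, t ≠ t' → y t ≠ y t') →
    (∀ t ∈ T, ∀ t' ∈ T, t ≠ t' → x t ≠ x t') →
    (∀ t ∈ T, φ (x t) ∈ Spn K φ A) →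
    (∀ t ∈ T, φ (x t) ∉ Spn K φ (A.erase (y t))) →
    (∀ t ∈ T, ∀ t' ∈ T, t < t' → φ (x t) ∈ Spn K φ (A.erase (y t'))) →
    Ind K φ ((A \ T.image y) ∪ T.image x) ∧
    Spn K φ ((A \ T.image y) ∪ T.image x) = Spn K φ A ∧
    ((A \ T.image y) ∪ T.image x).card = A.card := by
  classical
  induction n with
  | zero =>
    intro T A x y hcard hA _ _ _ _ _ _ _
    rw [Finset.card_eq_zero] at hcard
    subst hcard
    have e : (A \ (∅ : Finset ℕ).image y ∪ (∅ : Finset ℕ).image x) = A := by simp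
    rw [e]
    exact ⟨hA, rfl, rfl⟩
  | succ n ih =>
    intro T A x y hcard hA hyA hxA hyinj hxinj hxspn hxer htri
    have hTne : T.Nonempty := Finset.card_pos.1 (by omega)
    set t0 := T.min' hTne with ht0
    have ht0T : t0 ∈ T := T.min'_mem hTne
    set T' := T.erase t0 with hT'
    have hT'card : T'.card = n := by
      rw [hT', Finset.card_erase_of_mem ht0T, hcard]
      omega
    have hTins : T = insert t0 T' := (Finset.insert_erase ht0T).symm
    -- the swap
    set A₁ := insert (x t0) (A.erase (y t0)) with hA₁
    obtain ⟨hA₁ind, hA₁spn, hA₁card⟩ :=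
      swap_step hA (hyA t0 ht0T) (hxA t0 ht0T) (hxspn t0 ht0T) (hxer t0 ht0T)
    -- facts about elements of T'
    have ht0lt : ∀ t ∈ T', t0 < t := by
      intro t ht
      have h1 := T.min'_le t (Finset.mem_of_mem_erase ht)
      have h2 : t ≠ t0 := Finset.ne_of_mem_erase ht
      omega
    have hxy : ∀ t ∈ T, ∀ t' ∈ T, x t ≠ y t' := by
      intro t ht t' ht' h
      exact hxA t ht (h ▸ hyA t' ht')
    -- hypotheses for the inductive step on (T', A₁)
    have hyA' : ∀ t ∈ T', y t ∈ A₁ := by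
      intro t ht
      refine Finset.mem_insert_of_mem (Finset.mem_erase.2 ⟨?_, hyA t (Finset.mem_of_mem_erase ht)⟩)
      exact hyinj t (Finset.mem_of_mem_erase ht) t0 ht0T (Finset.ne_of_mem_erase ht)
    have hxA' : ∀ t ∈ T', x t ∉ A₁ := by
      intro t ht hmem
      rcases Finset.mem_insert.1 hmem with h | h
      · exact hxinj t (Finset.mem_of_mem_erase ht) t0 ht0T (Finset.ne_of_mem_erase ht) h
      · exact hxA t (Finset.mem_of_mem_erase ht) (Finset.mem_of_mem_erase h)
    have hsub1 : ∀ t ∈ T', Spn K φ (A₁.erase (y t)) ≤ Spn K φ (A.erase (y t)) := by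
      intro t ht
      refine spn_le_of_forall ?_
      intro a ha
      have haA₁ : a ∈ A₁ := Finset.mem_of_mem_erase ha
      have hay : a ≠ y t := Finset.ne_of_mem_erase ha
      rcases Finset.mem_insert.1 haA₁ with rfl | h
      · exact htri t0 ht0T t (Finset.mem_of_mem_erase ht) (ht0lt t ht)
      · exact mem_spn (Finset.mem_erase.2 ⟨hay, Finset.mem_of_mem_erase h⟩)
    have hsub2 : ∀ t ∈ T', Spn K φ (A.erase (y t)) ≤ Spn K φ (A₁.erase (y t)) := by
      intro t ht
      have htT := Finset.mem_of_mem_erase ht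
      have hyt0_ne : y t0 ≠ y t := hyinj t0 ht0T t htT (fun h => (Finset.ne_of_mem_erase ht) h.symm)
      have hyt0_mem : y t0 ∈ A.erase (y t) := Finset.mem_erase.2 ⟨hyt0_ne, hyA t0 ht0T⟩
      refine spn_le_of_forall ?_
      intro a ha
      have haA : a ∈ A := Finset.mem_of_mem_erase ha
      have hay : a ≠ y t := Finset.ne_of_mem_erase ha
      by_cases hat0 : a = y t0
      · -- exchange: recover `y t0` from `x t0`
        subst hat0
        have hxt0_mem : φ (x t0) ∈ Submodule.span K
            (insert (φ (y t0)) (φ '' ↑(((A.erase (y t)).erase (y t0))))) := by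
          rw [← spn_image_eq hyt0_mem]
          exact htri t0 ht0T t htT (ht0lt t ht)
        have hxt0_not : φ (x t0) ∉ Submodule.span K (φ '' ↑((A.erase (y t)).erase (y t0))) := by
          intro hc
          apply hxer t0 ht0T
          refine spn_mono (fun b hb => ?_) hc
          rw [Finset.erase_right_comm] at hb
          exact Finset.mem_of_mem_erase hb
        have hex := mem_span_insert_exchange hxt0_mem hxt0_not
        have heq : (insert (φ (x t0)) (φ '' ↑((A.erase (y t)).erase (y t0))) : Set V)
            = φ '' ↑(insert (x t0) ((A.erase (y t)).erase (y t0))) := by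
          push_cast; rw [Set.image_insert_eq]
        rw [heq] at hex
        refine spn_mono ?_ hex
        intro b hb
        rcases Finset.mem_insert.1 hb with rfl | hb
        · exact Finset.mem_erase.2 ⟨fun h => hxy t0 ht0T t htT h, Finset.mem_insert_self _ _⟩
        · have h1 := Finset.mem_erase.1 hb
          have h2 := Finset.mem_erase.1 h1.2
          exact Finset.mem_erase.2
            ⟨h2.1, Finset.mem_insert_of_mem (Finset.mem_erase.2 ⟨h1.1, h2.2⟩)⟩
      · refine mem_spn (Finset.mem_erase.2 ⟨hay, Finset.mem_insert_of_mem ?_⟩)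
        exact Finset.mem_erase.2 ⟨hat0, haA⟩
    obtain ⟨hind, hspn, hcard2⟩ := ih T' A₁ x y hT'card hA₁ind hyA' hxA'
      (fun t ht t' ht' h => hyinj t (Finset.mem_of_mem_erase ht) t' (Finset.mem_of_mem_erase ht') h)
      (fun t ht t' ht' h => hxinj t (Finset.mem_of_mem_erase ht) t' (Finset.mem_of_mem_erase ht') h)
      (fun t ht => hA₁spn ▸ hxspn t (Finset.mem_of_mem_erase ht))
      (fun t ht hc => hxer t (Finset.mem_of_mem_erase ht) (hsub1 t ht hc))
      (fun t ht t' ht' hlt => hsub2 t' ht' (htri t (Finset.mem_of_mem_erase ht) t'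
        (Finset.mem_of_mem_erase ht') hlt))
    -- identify the two resulting sets
    have hkey : (A₁ \ T'.image y) ∪ T'.image x = (A \ T.image y) ∪ T.image x := by
      have himy : T.image y = insert (y t0) (T'.image y) := by
        rw [hTins, Finset.image_insert]
      have himx : T.image x = insert (x t0) (T'.image x) := by
        rw [hTins, Finset.image_insert]
      have hx0y' : x t0 ∉ T'.image y := by
        intro hc
        obtain ⟨t, ht, hteq⟩ := Finset.mem_image.1 hc
        exact hxy t0 ht0T t (Finset.mem_of_mem_erase ht) hteq.symm
      have h1 : A₁ \ T'.image y = insert (x t0) (A \ T.image y) := by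
        rw [hA₁, Finset.insert_sdiff_of_notMem _ hx0y', Finset.erase_eq,
          sdiff_sdiff_left, himy, Finset.insert_eq]
        simp only [Finset.insert_eq]
        rfl
      rw [h1, Finset.insert_union, ← Finset.union_insert, ← himx]
    rw [hkey] at hind hspn hcard2
    exact ⟨hind, hspn.trans hA₁spn, hcard2.trans hA₁card⟩

end Tri

section Aug
variable {K V : Type*} [Field K] [AddCommGroup V] [Module K V]
variable {M : ℕ} {φ : Fin M → V}

variable (K φ) in
def Arc {n : ℕ} (A : Fin n → Finset (Fin M)) (u v : Fin M) : Prop :=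
  ∃ i, v ∈ A i ∧ u ∉ A i ∧ φ u ∈ Spn K φ (A i) ∧ φ u ∉ Spn K φ ((A i).erase v)

variable (K φ) in
def Addable {n : ℕ} (A : Fin n → Finset (Fin M)) (u : Fin M) : Prop :=
  ∃ q, φ u ∉ Spn K φ (A q)

variable (K φ) in
def IsPath {n : ℕ} (A : Fin n → Finset (Fin M)) (p : ℕ) (u : ℕ → Fin M) : Prop :=
  u 0 ∉ Finset.univ.biUnion A ∧ (∀ t < p, Arc K φ A (u t) (u (t + 1))) ∧ Addable K φ A (u p)

lemma exists_path {n : ℕ} {A B : Fin n → Finset (Fin M)}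
    (hAi : ∀ i, Ind K φ (A i)) (hAd : ∀ i j, i ≠ j → Disjoint (A i) (A j))
    (hBi : ∀ i, Ind K φ (B i)) (hBd : ∀ i j, i ≠ j → Disjoint (B i) (B j))
    (hlt : ∑ i, (A i).card < ∑ i, (B i).card) :
    ∃ p u, IsPath K φ A p u := by
  classical
  by_contra hno
  push_neg at hno
  set R : Finset (Fin M) := Finset.univ.filter (fun v => ∃ p : ℕ, ∃ u : ℕ → Fin M,
    u 0 ∉ Finset.univ.biUnion A ∧ (∀ t < p, Arc K φ A (u t) (u (t + 1))) ∧ u p = v) with hRdef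
  have hR0 : ∀ x : Fin M, x ∉ Finset.univ.biUnion A → x ∈ R := by
    intro x hx
    rw [hRdef, Finset.mem_filter]
    exact ⟨Finset.mem_univ _, 0, (fun _ => x), hx, fun t ht => absurd ht (by omega), rfl⟩
  have hRnotadd : ∀ v ∈ R, ¬ Addable K φ A v := by
    intro v hv hadd
    rw [hRdef, Finset.mem_filter] at hv
    obtain ⟨_, p, u, h1, h2, h3⟩ := hv
    exact hno p u ⟨h1, h2, h3 ▸ hadd⟩
  have hRspan : ∀ v ∈ R, ∀ i, φ v ∈ Spn K φ (A i) := by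
    intro v hv i
    have := hRnotadd v hv
    rw [Addable] at this
    push_neg at this
    exact this i
  have hRclosed : ∀ v ∈ R, ∀ i, φ v ∈ Spn K φ ((A i).filter (· ∈ R)) := by
    intro v hv i
    by_contra hc
    by_cases hvAi : v ∈ A i
    · exact hc (mem_spn (Finset.mem_filter.2 ⟨hvAi, hv⟩))
    · obtain ⟨y, hyA, hyR, hyer⟩ := exists_erase_not_mem_spn (hAi i) (hRspan v hv i) hc
      apply hyR
      have hv' := hv
      rw [hRdef, Finset.mem_filter] at hv'
      obtain ⟨_, p, u, h1, h2, h3⟩ := hv'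
      rw [hRdef, Finset.mem_filter]
      refine ⟨Finset.mem_univ _, p + 1, (fun m => if m ≤ p then u m else y), ?_, ?_, ?_⟩
      · simpa using h1
      · intro t ht
        show Arc K φ A (if t ≤ p then u t else y) (if t + 1 ≤ p then u (t + 1) else y)
        rcases Nat.lt_succ_iff_lt_or_eq.1 ht with ht' | ht'
        · have e1 : (if t ≤ p then u t else y) = u t := if_pos (by omega)
          have e2 : (if t + 1 ≤ p then u (t + 1) else y) = u (t + 1) := if_pos (by omega)
          rw [e1, e2]
          exact h2 t ht'
        · subst ht'
          have e1 : (if t ≤ t then u t else y) = u t := if_pos le_rfl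
          have e2 : (if t + 1 ≤ t then u (t + 1) else y) = y := if_neg (by omega)
          rw [e1, e2, h3]
          exact ⟨i, hyA, hvAi, hRspan v hv i, hyer⟩
      · simp
  -- counting
  have cnt1 : ∀ i, ((B i).filter (· ∈ R)).card ≤ ((A i).filter (· ∈ R)).card := by
    intro i
    refine ind_card_le_of_subset_spn (ind_mono (Finset.filter_subset _ _) (hBi i)) ?_
    intro x hx
    exact hRclosed x (Finset.mem_filter.1 hx).2 i
  have cnt2 : ∑ i, ((B i).filter (· ∉ R)).card ≤ ∑ i, ((A i).filter (· ∉ R)).card := by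
    have hBbi : ∑ i, ((B i).filter (· ∉ R)).card
        = (Finset.univ.biUnion (fun i => (B i).filter (· ∉ R))).card := by
      rw [Finset.card_biUnion]
      intro x _ y _ hxy
      exact Finset.disjoint_filter_filter (hBd x y hxy)
    have hAbi : ∑ i, ((A i).filter (· ∉ R)).card
        = (Finset.univ.biUnion (fun i => (A i).filter (· ∉ R))).card := by
      rw [Finset.card_biUnion]
      intro x _ y _ hxy
      exact Finset.disjoint_filter_filter (hAd x y hxy)
    rw [hBbi, hAbi]
    refine Finset.card_le_card ?_
    intro x hx
    rw [Finset.mem_biUnion] at hx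
    obtain ⟨i, _, hx⟩ := hx
    rw [Finset.mem_filter] at hx
    have hxA : x ∈ Finset.univ.biUnion A := by
      by_contra hc
      exact hx.2 (hR0 x hc)
    rw [Finset.mem_biUnion] at hxA
    obtain ⟨j, _, hj⟩ := hxA
    rw [Finset.mem_biUnion]
    exact ⟨j, Finset.mem_univ _, Finset.mem_filter.2 ⟨hj, hx.2⟩⟩
  have htot : ∑ i, (B i).card ≤ ∑ i, (A i).card := by
    have hsplit : ∀ (C : Fin n → Finset (Fin M)), ∑ i, (C i).card
        = ∑ i, ((C i).filter (· ∈ R)).card + ∑ i, ((C i).filter (· ∉ R)).card := by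
      intro C
      rw [← Finset.sum_add_distrib]
      refine Finset.sum_congr rfl (fun i _ => ?_)
      exact (Finset.card_filter_add_card_filter_not (fun x => x ∈ R)).symm
    rw [hsplit A, hsplit B]
    exact Nat.add_le_add (Finset.sum_le_sum (fun i _ => cnt1 i)) cnt2
  omega

end Aug

section Aug2
variable {K V : Type*} [Field K] [AddCommGroup V] [Module K V]
variable {M : ℕ} {φ : Fin M → V}

lemma aug {n : ℕ} {A B : Fin n → Finset (Fin M)}
    (hAi : ∀ i, Ind K φ (A i)) (hAd : ∀ i j, i ≠ j → Disjoint (A i) (A j))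
    (hBi : ∀ i, Ind K φ (B i)) (hBd : ∀ i j, i ≠ j → Disjoint (B i) (B j))
    (hlt : ∑ i, (A i).card < ∑ i, (B i).card) :
    ∃ (A' : Fin n → Finset (Fin M)) (i0 : Fin n) (x : Fin M),
      (∀ i, Ind K φ (A' i)) ∧ (∀ i j, i ≠ j → Disjoint (A' i) (A' j)) ∧
      x ∉ Finset.univ.biUnion A ∧
      Finset.univ.biUnion A' = insert x (Finset.univ.biUnion A) ∧
      (∀ i, i ≠ i0 → (A' i).card = (A i).card) ∧ (A' i0).card = (A i0).card + 1 := by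
  classical
  have hn : 0 < n := by
    rcases Nat.eq_zero_or_pos n with h | h
    · subst h; simp at hlt
    · exact h
  obtain ⟨p₀, u₀, hpath₀⟩ := exists_path hAi hAd hBi hBd hlt
  have hPex : ∃ p : ℕ, ∃ u : ℕ → Fin M, IsPath K φ A p u := ⟨p₀, u₀, hpath₀⟩
  set p := Nat.find hPex with hp
  obtain ⟨u, hu0, huarc, huadd⟩ : ∃ u : ℕ → Fin M, IsPath K φ A p u := Nat.find_spec hPex
  have hmin : ∀ m < p, ∀ v : ℕ → Fin M, ¬ IsPath K φ A m v := by
    intro m hm v hv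
    exact Nat.find_min hPex hm ⟨v, hv⟩
  -- surgery: no repeated vertices
  have hdist : ∀ s t, s < t → t ≤ p → u s ≠ u t := by
    intro s t hst htp heq
    by_cases htp' : t = p
    · subst htp'
      exact hmin s (by omega) u ⟨hu0, fun m hm => huarc m (by omega), heq ▸ huadd⟩
    · have htp2 : t < p := lt_of_le_of_ne htp htp'
      refine hmin (p - (t - s)) (by omega) (fun m => if m ≤ s then u m else u (m + (t - s)))
        ⟨by simpa using hu0, ?_, ?_⟩
      · intro m hm
        show Arc K φ A (if m ≤ s then u m else u (m + (t - s)))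
          (if m + 1 ≤ s then u (m + 1) else u (m + 1 + (t - s)))
        rcases lt_trichotomy m s with h | h | h
        · rw [if_pos (by omega), if_pos (by omega)]
          exact huarc m (by omega)
        · subst h
          rw [if_pos le_rfl, if_neg (by omega)]
          have : m + 1 + (t - m) = t + 1 := by omega
          rw [this, heq]
          exact huarc t htp2
        · rw [if_neg (by omega), if_neg (by omega)]
          have : m + 1 + (t - s) = (m + (t - s)) + 1 := by omega
          rw [this]
          exact huarc (m + (t - s)) (by omega)
      · show Addable K φ A (if p - (t - s) ≤ s then u (p - (t - s)) else u (p - (t - s) + (t - s)))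
        rw [if_neg (by omega)]
        have : p - (t - s) + (t - s) = p := by omega
        rw [this]
        exact huadd
  have hnoadd : ∀ t < p, ¬ Addable K φ A (u t) := by
    intro t ht hadd
    exact hmin t ht u ⟨hu0, fun m hm => huarc m (by omega), hadd⟩
  have hnoshort : ∀ s t', s < t' → t' < p → ¬ Arc K φ A (u s) (u (t' + 1)) := by
    intro s t' h1 h2 harc
    refine hmin (p - (t' - s)) (by omega) (fun m => if m ≤ s then u m else u (m + (t' - s)))
      ⟨by simpa using hu0, ?_, ?_⟩
    · intro m hm
      show Arc K φ A (if m ≤ s then u m else u (m + (t' - s)))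
        (if m + 1 ≤ s then u (m + 1) else u (m + 1 + (t' - s)))
      rcases lt_trichotomy m s with h | h | h
      · rw [if_pos (by omega), if_pos (by omega)]
        exact huarc m (by omega)
      · subst h
        rw [if_pos le_rfl, if_neg (by omega)]
        have : m + 1 + (t' - m) = t' + 1 := by omega
        rw [this]
        exact harc
      · rw [if_neg (by omega), if_neg (by omega)]
        have : m + 1 + (t' - s) = (m + (t' - s)) + 1 := by omega
        rw [this]
        exact huarc (m + (t' - s)) (by omega)
    · show Addable K φ A (if p - (t' - s) ≤ s then u (p - (t' - s)) else u (p - (t' - s) + (t' - s)))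
      rw [if_neg (by omega)]
      have : p - (t' - s) + (t' - s) = p := by omega
      rw [this]
      exact huadd
  -- choose witnesses for arcs
  have hwex : ∀ t, ∃ i : Fin n, t < p → (u (t + 1) ∈ A i ∧ u t ∉ A i ∧
      φ (u t) ∈ Spn K φ (A i) ∧ φ (u t) ∉ Spn K φ ((A i).erase (u (t + 1)))) := by
    intro t
    by_cases ht : t < p
    · obtain ⟨i, hi⟩ := huarc t ht
      exact ⟨i, fun _ => hi⟩
    · exact ⟨⟨0, hn⟩, fun h => absurd h ht⟩
  choose w hw using hwex
  obtain ⟨q, hq⟩ := huadd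
  -- the per-part time sets
  set T : Fin n → Finset ℕ := fun i => (Finset.range p).filter (fun t => w t = i) with hT
  have hTmem : ∀ i t, t ∈ T i ↔ (t < p ∧ w t = i) := by
    intro i t
    rw [hT]
    simp [Finset.mem_filter, Finset.mem_range]
  -- apply the triangular exchange within each part
  set A₁ : Fin n → Finset (Fin M) :=
    fun i => (A i \ (T i).image (fun t => u (t + 1))) ∪ (T i).image u with hA₁
  have htriall : ∀ i, Ind K φ (A₁ i) ∧ Spn K φ (A₁ i) = Spn K φ (A i) ∧
      (A₁ i).card = (A i).card := by
    intro i
    refine tri (T i).card (T i) (A i) u (fun t => u (t + 1)) rfl (hAi i) ?_ ?_ ?_ ?_ ?_ ?_ ?_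
    · intro t ht
      obtain ⟨ht1, ht2⟩ := (hTmem i t).1 ht
      exact ht2 ▸ (hw t ht1).1
    · intro t ht
      obtain ⟨ht1, ht2⟩ := (hTmem i t).1 ht
      exact ht2 ▸ (hw t ht1).2.1
    · intro t ht t' ht' hne
      obtain ⟨ht1, _⟩ := (hTmem i t).1 ht
      obtain ⟨ht1', _⟩ := (hTmem i t').1 ht'
      rcases Nat.lt_or_ge t t' with h | h
      · exact hdist (t + 1) (t' + 1) (by omega) (by omega)
      · have h2 : t' < t := by omega
        exact fun hc => hdist (t' + 1) (t + 1) (by omega) (by omega) hc.symm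
    · intro t ht t' ht' hne
      obtain ⟨ht1, _⟩ := (hTmem i t).1 ht
      obtain ⟨ht1', _⟩ := (hTmem i t').1 ht'
      rcases Nat.lt_or_ge t t' with h | h
      · exact hdist t t' (by omega) (by omega)
      · have h2 : t' < t := by omega
        exact fun hc => hdist t' t (by omega) (by omega) hc.symm
    · intro t ht
      obtain ⟨ht1, ht2⟩ := (hTmem i t).1 ht
      exact ht2 ▸ (hw t ht1).2.2.1
    · intro t ht
      obtain ⟨ht1, ht2⟩ := (hTmem i t).1 ht
      exact ht2 ▸ (hw t ht1).2.2.2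
    · intro t ht t' ht' hlt'
      obtain ⟨ht1, ht2⟩ := (hTmem i t).1 ht
      obtain ⟨ht1', ht2'⟩ := (hTmem i t').1 ht'
      by_contra hc
      exact hnoshort t t' hlt' ht1'
        ⟨i, ht2' ▸ (hw t' ht1').1, ht2 ▸ (hw t ht1).2.1, ht2 ▸ (hw t ht1).2.2.1, hc⟩
  -- the new family
  set A' : Fin n → Finset (Fin M) := fun i => if i = q then insert (u p) (A₁ i) else A₁ i
    with hA'
  -- u p is never in A₁ i
  have hupA : ∀ i, u p ∉ A i → True := fun _ _ => trivial
  have hupq : u p ∉ A q := fun hc => hq (mem_spn hc)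
  have hmemA₁ : ∀ i a, a ∈ A₁ i ↔
      ((a ∈ A i ∧ ∀ t, t ∈ T i → a ≠ u (t + 1)) ∨ ∃ t, t ∈ T i ∧ a = u t) := by
    intro i a
    rw [hA₁]
    simp only [Finset.mem_union, Finset.mem_sdiff, Finset.mem_image]
    constructor
    · rintro (⟨h1, h2⟩ | ⟨t, ht, rfl⟩)
      · exact Or.inl ⟨h1, fun t ht hc => h2 ⟨t, ht, hc.symm⟩⟩
      · exact Or.inr ⟨t, ht, rfl⟩
    · rintro (⟨h1, h2⟩ | ⟨t, ht, rfl⟩)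
      · exact Or.inl ⟨h1, fun ⟨t, ht, hc⟩ => h2 t ht hc.symm⟩
      · exact Or.inr ⟨t, ht, rfl⟩
  -- membership of u-values in original parts
  have humem : ∀ t, 1 ≤ t → t ≤ p → u t ∈ A (w (t - 1)) := by
    intro t h1 h2
    have h3 : t - 1 < p := by omega
    have := (hw (t - 1) h3).1
    have e : t - 1 + 1 = t := by omega
    rwa [e] at this
  have hu0A : ∀ i, u 0 ∉ A i := by
    intro i hc
    exact hu0 (Finset.mem_biUnion.2 ⟨i, Finset.mem_univ _, hc⟩)
  -- u p not in any A₁ i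
  have hupA₁ : ∀ i, u p ∉ A₁ i := by
    intro i hc
    rcases (hmemA₁ i (u p)).1 hc with ⟨h1, h2⟩ | ⟨t, ht, h3⟩
    · by_cases hp0 : p = 0
      · exact hu0A i (hp0 ▸ h1)
      · have h4 := humem p (by omega) le_rfl
        have h5 : i = w (p - 1) := by
          by_contra hne
          exact (Finset.disjoint_left.1 (hAd i (w (p - 1)) hne)) h1 h4
        have h6 : p - 1 ∈ T i := (hTmem i (p - 1)).2 ⟨by omega, h5.symm⟩
        exact h2 (p - 1) h6 (by rw [show p - 1 + 1 = p by omega])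
    · obtain ⟨ht1, _⟩ := (hTmem i t).1 ht
      exact hdist t p ht1 le_rfl h3.symm
  have hA₁sub : ∀ i, A₁ i ⊆ A' i := by
    intro i
    simp only [hA']
    by_cases hiq : i = q
    · rw [if_pos hiq]; exact Finset.subset_insert _ _
    · rw [if_neg hiq]
  have hmemA' : ∀ i a, a ∈ A' i → (i = q ∧ a = u p) ∨ a ∈ A₁ i := by
    intro i a h
    simp only [hA'] at h
    by_cases hiq : i = q
    · rw [if_pos hiq] at h
      rcases Finset.mem_insert.1 h with h | h
      · exact Or.inl ⟨hiq, h⟩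
      · exact Or.inr h
    · rw [if_neg hiq] at h
      exact Or.inr h
  -- pairwise disjointness of the new parts
  have hA₁disj : ∀ i j, i ≠ j → Disjoint (A₁ i) (A₁ j) := by
    have key : ∀ i j, i ≠ j → ∀ a, a ∈ A₁ i → a ∈ A₁ j →
        (a ∈ A i ∧ ∀ t, t ∈ T i → a ≠ u (t + 1)) → False := by
      intro i j hij a hai haj ⟨h1, h2⟩
      rcases (hmemA₁ j a).1 haj with ⟨h1', _⟩ | ⟨t, ht, rfl⟩
      · exact (Finset.disjoint_left.1 (hAd i j hij)) h1 h1'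
      · obtain ⟨ht1, ht2⟩ := (hTmem j t).1 ht
        by_cases ht0 : t = 0
        · exact hu0A i (ht0 ▸ h1)
        · have h4 := humem t (by omega) (by omega)
          have h5 : i = w (t - 1) := by
            by_contra hne
            exact (Finset.disjoint_left.1 (hAd i (w (t - 1)) hne)) h1 h4
          have h6 : t - 1 ∈ T i := (hTmem i (t - 1)).2 ⟨by omega, h5.symm⟩
          exact h2 (t - 1) h6 (by rw [show t - 1 + 1 = t by omega])
    intro i j hij
    rw [Finset.disjoint_left]
    intro a hai haj
    rcases (hmemA₁ i a).1 hai with hold | ⟨t, ht, rfl⟩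
    · exact key i j hij a hai haj hold
    · rcases (hmemA₁ j _).1 haj with hold' | ⟨t', ht', heq⟩
      · exact key j i (Ne.symm hij) _ haj hai hold'
      · obtain ⟨ht1, ht2⟩ := (hTmem i t).1 ht
        obtain ⟨ht1', ht2'⟩ := (hTmem j t').1 ht'
        have : t = t' := by
          by_contra hne
          rcases Nat.lt_or_ge t t' with h | h
          · exact hdist t t' h (by omega) heq
          · exact hdist t' t (by omega) (by omega) heq.symm
        subst this
        exact hij (ht2.symm.trans ht2')
  have hdisj' : ∀ i j, i ≠ j → Disjoint (A' i) (A' j) := by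
    intro i j hij
    rw [Finset.disjoint_left]
    intro a hai haj
    rcases hmemA' i a hai with ⟨hiq, rfl⟩ | hai'
    · rcases hmemA' j _ haj with ⟨hjq, _⟩ | haj'
      · exact hij (hiq.trans hjq.symm)
      · exact hupA₁ j haj'
    · rcases hmemA' j a haj with ⟨hjq, rfl⟩ | haj'
      · exact hupA₁ i hai'
      · exact (Finset.disjoint_left.1 (hA₁disj i j hij)) hai' haj'
  -- the union
  have hAq' : A' q = insert (u p) (A₁ q) := by
    simp only [hA']
    simp
  have hbiU : Finset.univ.biUnion A' = insert (u 0) (Finset.univ.biUnion A) := by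
    ext a
    rw [Finset.mem_biUnion, Finset.mem_insert]
    constructor
    · rintro ⟨i, _, hai⟩
      have hcase : a = u p ∨ a ∈ A₁ i := by
        rcases hmemA' i a hai with ⟨_, h⟩ | h
        · exact Or.inl h
        · exact Or.inr h
      have hval : (∃ t, t ≤ p ∧ a = u t) ∨ a ∈ Finset.univ.biUnion A := by
        rcases hcase with h | h
        · exact Or.inl ⟨p, le_rfl, h⟩
        · rcases (hmemA₁ i a).1 h with ⟨h1, _⟩ | ⟨t, ht, rfl⟩
          · exact Or.inr (Finset.mem_biUnion.2 ⟨i, Finset.mem_univ _, h1⟩)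
          · obtain ⟨ht1, _⟩ := (hTmem i t).1 ht
            exact Or.inl ⟨t, by omega, rfl⟩
      rcases hval with ⟨t, htp, rfl⟩ | h
      · by_cases ht0 : t = 0
        · exact Or.inl (by rw [ht0])
        · exact Or.inr (Finset.mem_biUnion.2
            ⟨w (t - 1), Finset.mem_univ _, humem t (by omega) htp⟩)
      · exact Or.inr h
    · rintro (rfl | h)
      · by_cases hp0 : p = 0
        · refine ⟨q, Finset.mem_univ _, ?_⟩
          rw [hAq', hp0]
          exact Finset.mem_insert_self _ _
        · refine ⟨w 0, Finset.mem_univ _, hA₁sub _ ?_⟩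
          refine (hmemA₁ _ _).2 (Or.inr ⟨0, (hTmem _ 0).2 ⟨by omega, rfl⟩, rfl⟩)
      · obtain ⟨j, _, haj⟩ := Finset.mem_biUnion.1 h
        by_cases him : ∃ t, t ∈ T j ∧ a = u (t + 1)
        · obtain ⟨t, ht, rfl⟩ := him
          obtain ⟨ht1, _⟩ := (hTmem j t).1 ht
          by_cases htp : t + 1 = p
          · refine ⟨q, Finset.mem_univ _, ?_⟩
            rw [hAq', htp]
            exact Finset.mem_insert_self _ _
          · refine ⟨w (t + 1), Finset.mem_univ _, hA₁sub _ ?_⟩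
            refine (hmemA₁ _ _).2 (Or.inr ⟨t + 1, (hTmem _ (t + 1)).2 ⟨by omega, rfl⟩, rfl⟩)
        · push_neg at him
          refine ⟨j, Finset.mem_univ _, hA₁sub _ ?_⟩
          exact (hmemA₁ _ _).2 (Or.inl ⟨haj, fun t ht hc => him t ht hc⟩)
  -- conclusion
  refine ⟨A', q, u 0, ?_, hdisj', hu0, hbiU, ?_, ?_⟩
  · intro i
    by_cases hiq : i = q
    · subst hiq
      rw [hAq']
      refine ind_insert (htriall i).1 ?_
      rw [(htriall i).2.1]
      exact hq
    · simp only [hA']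
      rw [if_neg hiq]
      exact (htriall i).1
  · intro i hiq
    simp only [hA']
    rw [if_neg hiq]
    exact (htriall i).2.2
  · rw [hAq', Finset.card_insert_of_notMem (hupA₁ q), (htriall q).2.2]

end Aug2

section Cnt
variable {k : ℕ}

def cnt (s : Fin k → ℕ) (c : ℕ) : ℕ := (Finset.univ.filter (fun i => c ≤ s i)).card

lemma cnt_le (s : Fin k → ℕ) (c : ℕ) : cnt s c ≤ k := by
  refine (Finset.card_filter_le _ _).trans ?_
  simp

lemma cnt_anti (s : Fin k → ℕ) {c c' : ℕ} (h : c ≤ c') : cnt s c' ≤ cnt s c := by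
  refine Finset.card_le_card ?_
  intro i hi
  rw [Finset.mem_filter] at hi ⊢
  exact ⟨hi.1, le_trans h hi.2⟩

lemma lt_cnt_iff {s : Fin k → ℕ} (hs : Antitone s) (c : ℕ) (i : Fin k) :
    (i : ℕ) < cnt s c ↔ c ≤ s i := by
  constructor
  · intro h
    by_contra hc
    push_neg at hc
    have hsub : Finset.univ.filter (fun j => c ≤ s j) ⊆ Finset.Iio i := by
      intro j hj
      rw [Finset.mem_filter] at hj
      rw [Finset.mem_Iio]
      by_contra hji
      push_neg at hji
      exact absurd (le_trans hj.2 (hs hji)) (by omega)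
    have := Finset.card_le_card hsub
    rw [Fin.card_Iio] at this
    rw [cnt] at h
    omega
  · intro h
    have hsub : Finset.Iic i ⊆ Finset.univ.filter (fun j => c ≤ s j) := by
      intro j hj
      rw [Finset.mem_Iic] at hj
      rw [Finset.mem_filter]
      exact ⟨Finset.mem_univ _, le_trans h (hs hj)⟩
    have := Finset.card_le_card hsub
    rw [Fin.card_Iic] at this
    rw [cnt]
    omega

lemma cnt_perm (s : Fin k → ℕ) (σ : Equiv.Perm (Fin k)) (c : ℕ) :
    cnt (s ∘ σ) c = cnt s c := by
  rw [cnt, cnt, ← Fintype.card_subtype, ← Fintype.card_subtype]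
  exact Fintype.card_congr (σ.subtypeEquiv (fun i => Iff.rfl))

end Cnt

section PartChar
variable {K V : Type*} [Field K] [AddCommGroup V] [Module K V]
variable {M : ℕ} {φ : Fin M → V}

lemma partSizes_char {k : ℕ} {P : Fin k → Finset (Fin M)}
    (hanti : Antitone (fun i => (P i).card)) {c : ℕ} (hc : 1 ≤ c) (m : ℕ) :
    c ≤ PartSizes P m ↔ m < cnt (fun i => (P i).card) c := by
  by_cases hm : m < k
  · rw [PartSizes, dif_pos hm]
    exact ((lt_cnt_iff hanti c ⟨m, hm⟩).symm)
  · rw [PartSizes, dif_neg hm]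
    have h1 := cnt_le (fun i => (P i).card) c
    constructor
    · omega
    · omega

lemma antitone_of_ordered {k : ℕ} {P : Fin k → Finset (Fin M)}
    (h : ∀ i j : Fin k, i ≤ j → (P j).card ≤ (P i).card) :
    Antitone (fun i => (P i).card) := fun i j hij => h i j hij

/-- sum of all part sizes equals the size of the ground set -/
lemma partSizes_sum {k N : ℕ} {Ω : Finset (Fin M)} {P : Fin k → Finset (Fin M)}
    (hd : ∀ i j, i ≠ j → Disjoint (P i) (P j)) (hcov : Finset.univ.biUnion P = Ω)
    (hN : k ≤ N) : ∑ i ∈ Finset.range N, PartSizes P i = Ω.card := by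
  classical
  have h1 : ∑ i ∈ Finset.range N, PartSizes P i = ∑ i ∈ Finset.range k, PartSizes P i := by
    rw [← Finset.sum_range_add_sum_Ico _ hN]
    have : ∑ i ∈ Finset.Ico k N, PartSizes P i = 0 := by
      refine Finset.sum_eq_zero (fun i hi => ?_)
      rw [Finset.mem_Ico] at hi
      rw [PartSizes, dif_neg (by omega)]
    omega
  rw [h1, ← Fin.sum_univ_eq_sum_range (fun i => PartSizes P i) k]
  have h2 : ∀ i : Fin k, PartSizes P (i : ℕ) = (P i).card := by
    intro i
    rw [PartSizes, dif_pos i.isLt]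
  rw [Finset.sum_congr rfl (fun i _ => h2 i), ← hcov, Finset.card_biUnion]
  intro x _ y _ hxy
  exact hd x y hxy

end PartChar

section Sorting
variable {K V : Type*} [Field K] [AddCommGroup V] [Module K V]
variable {M : ℕ} {φ : Fin M → V}

lemma card_filter_val_lt {k : ℕ} (d : ℕ) (hd : d ≤ k) :
    (Finset.univ.filter (fun i : Fin k => (i : ℕ) < d)).card = d := by
  have h : (Finset.univ.filter (fun i : Fin k => (i : ℕ) < d)).card
      = (Finset.range d).card := by
    refine Finset.card_bij (fun i _ => (i : ℕ)) ?_ ?_ ?_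
    · intro i hi
      rw [Finset.mem_filter] at hi
      rw [Finset.mem_range]
      exact hi.2
    · intro i hi i' hi' h
      exact Fin.ext h
    · intro j hj
      rw [Finset.mem_range] at hj
      exact ⟨⟨j, by omega⟩, Finset.mem_filter.2 ⟨Finset.mem_univ _, hj⟩, rfl⟩
  rw [h, Finset.card_range]

lemma exists_ordered {N : ℕ} {Ω : Finset (Fin M)} {C : Fin N → Finset (Fin M)}
    (hCi : ∀ i, Ind K φ (C i)) (hCd : ∀ i j, i ≠ j → Disjoint (C i) (C j))
    (hcov : Finset.univ.biUnion C = Ω) :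
    ∃ (l : ℕ) (P : Fin l → Finset (Fin M)),
      IsOrderedLIPartitionOn K φ Ω P ∧
      ∀ c, 1 ≤ c → cnt (fun m => (P m).card) c = cnt (fun i => (C i).card) c := by
  classical
  set s : Fin N → ℕ := fun i => (C i).card with hs
  have hsM : ∀ i, s i ≤ M := by
    intro i
    rw [hs]
    exact (Finset.card_le_univ _).trans (by simp)
  set g : Fin N → ℕ := fun i => M - s i with hg
  set σ : Equiv.Perm (Fin N) := Tuple.sort g with hσ
  have hmono : Monotone (g ∘ σ) := Tuple.monotone_sort g
  have hanti : Antitone (s ∘ σ) := by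
    intro i j hij
    have h1 := hmono hij
    have h2 := hsM (σ i)
    have h3 := hsM (σ j)
    simp only [Function.comp, hg] at h1 ⊢
    omega
  set l : ℕ := cnt (s ∘ σ) 1 with hl
  have hlN : l ≤ N := cnt_le _ _
  set e : Fin l → Fin N := fun m => ⟨m.1, lt_of_lt_of_le m.isLt hlN⟩ with he
  set P : Fin l → Finset (Fin M) := fun m => C (σ (e m)) with hP
  have hPcard : ∀ m : Fin l, (P m).card = s (σ (e m)) := fun m => rfl
  have hPnon : ∀ m : Fin l, 1 ≤ (P m).card := by
    intro m
    rw [hPcard]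
    have : ((e m : Fin N) : ℕ) < cnt (s ∘ σ) 1 := m.isLt
    exact (lt_cnt_iff hanti 1 (e m)).1 this
  refine ⟨l, P, ⟨?_, ?_, ?_, ?_, ?_⟩, ?_⟩
  · intro m
    exact Finset.card_pos.1 (hPnon m)
  · intro i j hij
    refine hCd _ _ ?_
    intro hc
    apply hij
    have h2 : e i = e j := σ.injective hc
    have h3 : ((e i : Fin N) : ℕ) = ((e j : Fin N) : ℕ) := congrArg Fin.val h2
    exact Fin.ext h3
  · ext a
    rw [Finset.mem_biUnion]
    constructor
    · rintro ⟨i, _, hai⟩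
      rw [← hcov, Finset.mem_biUnion]
      exact ⟨σ (e i), Finset.mem_univ _, hai⟩
    · intro ha
      rw [← hcov, Finset.mem_biUnion] at ha
      obtain ⟨i, _, hai⟩ := ha
      set m : Fin N := σ.symm i with hm
      have him : σ m = i := σ.apply_symm_apply i
      have hml : (m : ℕ) < l := by
        rw [hl]
        refine (lt_cnt_iff hanti 1 m).2 ?_
        show 1 ≤ s (σ m)
        rw [him, hs]
        exact Finset.card_pos.2 ⟨a, hai⟩
      refine ⟨⟨m, hml⟩, Finset.mem_univ _, ?_⟩
      show a ∈ C (σ (e ⟨m, hml⟩))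
      have : e ⟨m, hml⟩ = m := Fin.ext rfl
      rw [this, him]
      exact hai
  · intro m
    exact hCi _
  · intro i j hij
    have : e i ≤ e j := hij
    exact hanti this
  · intro c hc
    have hcnt_le : cnt (s ∘ σ) c ≤ l := by
      rw [hl]
      exact cnt_anti _ hc
    have h1 : cnt (fun m : Fin l => (P m).card) c = cnt (s ∘ σ) c := by
      rw [cnt, cnt]
      have hfl : Finset.univ.filter (fun m : Fin l => c ≤ (P m).card)
          = Finset.univ.filter (fun m : Fin l => (m : ℕ) < cnt (s ∘ σ) c) := by
        ext m
        rw [Finset.mem_filter, Finset.mem_filter, hPcard]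
        constructor
        · intro ⟨h1, h2⟩
          refine ⟨h1, ?_⟩
          have := (lt_cnt_iff hanti c (e m)).2 h2
          exact this
        · intro ⟨h1, h2⟩
          exact ⟨h1, (lt_cnt_iff hanti c (e m)).1 h2⟩
      have hfr : Finset.univ.filter (fun i : Fin N => c ≤ s (σ i))
          = Finset.univ.filter (fun i : Fin N => (i : ℕ) < cnt (s ∘ σ) c) := by
        ext i
        rw [Finset.mem_filter, Finset.mem_filter]
        constructor
        · intro ⟨h1, h2⟩
          exact ⟨h1, (lt_cnt_iff hanti c i).2 h2⟩
        · intro ⟨h1, h2⟩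
          exact ⟨h1, (lt_cnt_iff hanti c i).1 h2⟩
      rw [hfl]
      have : Finset.univ.filter (fun i : Fin N => c ≤ (s ∘ σ) i)
          = Finset.univ.filter (fun i : Fin N => c ≤ s (σ i)) := rfl
      rw [this, hfr, card_filter_val_lt _ (hcnt_le.trans hlN),
        card_filter_val_lt _ hcnt_le]
    rw [h1]
    have h2 : cnt (s ∘ σ) c = cnt s c := cnt_perm s σ c
    rw [h2]

end Sorting

section Directions
variable {K V : Type*} [Field K] [AddCommGroup V] [Module K V]
variable {M : ℕ} {φ : Fin M → V}

lemma lexLE_of_major {k l : ℕ} {F : Fin l → Finset (Fin M)} {P : Fin k → Finset (Fin M)}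
    (hF : IsOrderedLIPartitionOn K φ Finset.univ F)
    (hP : IsOrderedLIPartitionOn K φ Finset.univ P)
    (hlk : l ≤ k)
    (hsums : ∀ j ≤ l, ∑ i ∈ Finset.range j, PartSizes P i
      ≤ ∑ i ∈ Finset.range j, PartSizes F i) :
    LexLE (PartSizes P) (PartSizes F) := by
  obtain ⟨hFne, hFd, hFcov, hFind, hFord⟩ := hF
  obtain ⟨hPne, hPd, hPcov, hPind, hPord⟩ := hP
  by_cases hall : ∀ m, PartSizes P m = PartSizes F m
  · exact Or.inl (funext hall)
  · push_neg at hall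
    have hn₀ := Nat.find_spec hall
    set n₀ := Nat.find hall with hn₀def
    have hagree : ∀ m < n₀, PartSizes P m = PartSizes F m := by
      intro m hm
      exact of_not_not (Nat.find_min hall hm)
    refine Or.inr ⟨n₀, hagree, ?_⟩
    rcases lt_or_ge n₀ l with hlt | hge
    · have h1 := hsums (n₀ + 1) (by omega)
      rw [Finset.sum_range_succ, Finset.sum_range_succ] at h1
      have h2 : ∑ i ∈ Finset.range n₀, PartSizes P i
          = ∑ i ∈ Finset.range n₀, PartSizes F i :=
        Finset.sum_congr rfl (fun m hm => hagree m (Finset.mem_range.1 hm))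
      have h3 : PartSizes P n₀ ≤ PartSizes F n₀ := by omega
      exact lt_of_le_of_ne h3 hn₀
    · exfalso
      set N := max k (n₀ + 1) with hN
      have hMF : ∑ i ∈ Finset.range l, PartSizes F i = Finset.univ.card :=
        partSizes_sum hFd hFcov le_rfl
      have hMP : ∑ i ∈ Finset.range N, PartSizes P i = Finset.univ.card :=
        partSizes_sum hPd hPcov (le_max_left _ _)
      have h2 : ∑ i ∈ Finset.range l, PartSizes P i
          = ∑ i ∈ Finset.range l, PartSizes F i :=
        Finset.sum_congr rfl (fun m hm => hagree m (by
          have := Finset.mem_range.1 hm; omega))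
      have h3 : ∑ i ∈ Finset.range l, PartSizes P i
          + ∑ i ∈ Finset.Ico l N, PartSizes P i
          = ∑ i ∈ Finset.range N, PartSizes P i :=
        Finset.sum_range_add_sum_Ico _ (by omega)
      have h4 : ∑ i ∈ Finset.Ico l N, PartSizes P i = 0 := by omega
      have h5 : PartSizes P n₀ = 0 := by
        have := (Finset.sum_eq_zero_iff.1 h4) n₀ (Finset.mem_Ico.2 ⟨hge, by omega⟩)
        exact this
      have h6 : PartSizes F n₀ = 0 := by
        rw [PartSizes, dif_neg (by omega)]
      exact hn₀ (h5.trans h6.symm)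

lemma sums_le_of_fundamental {l : ℕ} {F : Fin l → Finset (Fin M)}
    (hfund : IsFundamentalOn K φ Finset.univ F) :
    ∀ (k : ℕ) (P : Fin k → Finset (Fin M)), IsOrderedLIPartitionOn K φ Finset.univ P →
      ∀ j ≤ l, ∑ i ∈ Finset.range j, PartSizes P i
        ≤ ∑ i ∈ Finset.range j, PartSizes F i := by
  classical
  obtain ⟨hFpart, hlex⟩ := hfund
  obtain ⟨hFne, hFd, hFcov, hFind, hFord⟩ := hFpart
  intro k P hPpart j hj
  obtain ⟨hPne, hPd, hPcov, hPind, hPord⟩ := hPpart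
  by_contra hgt
  push_neg at hgt
  set A : Fin j → Finset (Fin M) := fun i => F ⟨i.1, lt_of_lt_of_le i.isLt hj⟩ with hA
  set B : Fin j → Finset (Fin M) := fun i => if h : i.1 < k then P ⟨i.1, h⟩ else ∅ with hB
  have hsA : ∑ i, (A i).card = ∑ i ∈ Finset.range j, PartSizes F i := by
    rw [← Fin.sum_univ_eq_sum_range (PartSizes F) j]
    refine Finset.sum_congr rfl (fun i _ => ?_)
    rw [PartSizes, dif_pos (lt_of_lt_of_le i.isLt hj)]
  have hsB : ∑ i, (B i).card = ∑ i ∈ Finset.range j, PartSizes P i := by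
    rw [← Fin.sum_univ_eq_sum_range (PartSizes P) j]
    refine Finset.sum_congr rfl (fun i _ => ?_)
    simp only [hB, PartSizes]
    by_cases h : i.1 < k
    · rw [dif_pos h, dif_pos h]
    · rw [dif_neg h, dif_neg h, Finset.card_empty]
  have haug := aug (A := A) (B := B) (fun i => hFind _)
    (fun i i' hne => hFd _ _ (fun hc => hne (by
      have h2 := congrArg Fin.val hc
      exact Fin.ext h2)))
    (fun i => by
      simp only [hB]
      by_cases h : i.1 < k
      · rw [dif_pos h]; exact hPind _
      · rw [dif_neg h]; exact ind_empty)
    (fun i i' hne => by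
      simp only [hB]
      by_cases h : i.1 < k <;> by_cases h' : i'.1 < k
      · rw [dif_pos h, dif_pos h']
        exact hPd _ _ (fun hc => hne (by
          have h2 := congrArg Fin.val hc
          exact Fin.ext h2))
      · rw [dif_pos h, dif_neg h']; exact Finset.disjoint_empty_right _
      · rw [dif_neg h]; exact Finset.disjoint_empty_left _
      · rw [dif_neg h]; exact Finset.disjoint_empty_left _)
    (by rw [hsA, hsB]; exact hgt)
  obtain ⟨A', i0, x, haind, hadisj, hxout, hacov, hacard, hacard0⟩ := haug
  -- locate x in the tail of F
  have hx_univ : x ∈ Finset.univ.biUnion F := by rw [hFcov]; exact Finset.mem_univ x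
  obtain ⟨q₀, _, hxq₀⟩ := Finset.mem_biUnion.1 hx_univ
  have hjq₀ : j ≤ (q₀ : ℕ) := by
    by_contra hc
    push_neg at hc
    apply hxout
    refine Finset.mem_biUnion.2 ⟨⟨q₀.1, hc⟩, Finset.mem_univ _, ?_⟩
    simp only [hA]
    have : F ⟨q₀.1, q₀.isLt⟩ = F q₀ := congrArg F (Fin.ext rfl)
    exact this ▸ hxq₀
  set i0' : Fin l := ⟨i0.1, lt_of_lt_of_le i0.isLt hj⟩ with hi0'
  set a := (F i0').card with ha
  set b := (F q₀).card with hb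
  have hba : b ≤ a := hFord i0' q₀ (by rw [Fin.le_def]; show i0.1 ≤ q₀.1; omega)
  have hb1 : 1 ≤ b := Finset.card_pos.2 ⟨x, hxq₀⟩
  have hi0q : i0' ≠ q₀ := by
    intro hc
    have := congrArg Fin.val hc
    simp only [hi0'] at this
    omega
  -- the improved (unordered) partition
  set C : Fin l → Finset (Fin M) := fun i =>
    if h : (i : ℕ) < j then A' ⟨i.1, h⟩ else (F i).erase x with hC
  have hC1 : ∀ (i : Fin l) (h : (i : ℕ) < j), C i = A' ⟨i.1, h⟩ := by
    intro i h
    simp only [hC]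
    rw [dif_pos h]
  have hC2 : ∀ (i : Fin l), ¬ (i : ℕ) < j → C i = (F i).erase x := by
    intro i h
    simp only [hC]
    rw [dif_neg h]
  have hxtail : ∀ i : Fin l, i ≠ q₀ → x ∉ F i := by
    intro i hne hc
    exact (Finset.disjoint_left.1 (hFd i q₀ hne)) hc hxq₀
  -- cardinalities of C
  have hAeqF : ∀ (i : Fin l) (h : (i : ℕ) < j), A ⟨i.1, h⟩ = F i := by
    intro i h
    simp only [hA]
  have hcard_i0 : (C i0').card = a + 1 := by
    rw [hC1 i0' i0.isLt]
    have h1 : (⟨i0'.1, i0.isLt⟩ : Fin j) = i0 := by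
      apply Fin.ext
      rfl
    rw [h1, hacard0]
  have hcard_q : (C q₀).card = b - 1 := by
    rw [hC2 q₀ (by omega), Finset.card_erase_of_mem hxq₀]
  have hcard_lt : ∀ (i : Fin l) (h : (i : ℕ) < j), i ≠ i0' → (C i).card = (F i).card := by
    intro i h hne
    rw [hC1 i h]
    have h2 : (⟨i.1, h⟩ : Fin j) ≠ i0 := by
      intro hc
      apply hne
      have h3 := congrArg Fin.val hc
      exact Fin.ext h3
    rw [hacard _ h2, hAeqF i h]
  have hcard_ge : ∀ (i : Fin l), ¬ (i : ℕ) < j → i ≠ q₀ → (C i).card = (F i).card := by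
    intro i h hne
    rw [hC2 i h, Finset.erase_eq_of_notMem (hxtail i hne)]
  -- C is an (unordered) LI partition of univ
  have hCind : ∀ i, Ind K φ (C i) := by
    intro i
    by_cases h : (i : ℕ) < j
    · rw [hC1 i h]; exact haind _
    · rw [hC2 i h]; exact ind_mono (Finset.erase_subset _ _) (hFind i)
  have hA'sub : ∀ i2 : Fin j, A' i2 ⊆ insert x (Finset.univ.biUnion A) := by
    intro i2
    rw [← hacov]
    intro z hz
    exact Finset.mem_biUnion.2 ⟨i2, Finset.mem_univ _, hz⟩
  have hmix : ∀ (i i' : Fin l), (i : ℕ) < j → ¬ (i' : ℕ) < j → Disjoint (C i) (C i') := by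
    intro i i' h h'
    rw [Finset.disjoint_left]
    intro z hzi hzi'
    rw [hC1 i h] at hzi
    rw [hC2 i' h'] at hzi'
    have hzx : z ≠ x := Finset.ne_of_mem_erase hzi'
    have hz2 := hA'sub _ hzi
    rcases Finset.mem_insert.1 hz2 with hc | hc
    · exact hzx hc
    · obtain ⟨i₂, _, hzA⟩ := Finset.mem_biUnion.1 hc
      simp only [hA] at hzA
      have hne : (⟨i₂.1, lt_of_lt_of_le i₂.isLt hj⟩ : Fin l) ≠ i' := by
        intro hc2
        have := congrArg Fin.val hc2
        simp only at this
        omega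
      exact (Finset.disjoint_left.1 (hFd _ _ hne)) hzA (Finset.mem_of_mem_erase hzi')
  have hCd : ∀ i i', i ≠ i' → Disjoint (C i) (C i') := by
    intro i i' hne
    by_cases h : (i : ℕ) < j <;> by_cases h' : (i' : ℕ) < j
    · rw [hC1 i h, hC1 i' h']
      refine hadisj _ _ ?_
      intro hc
      have h3 := congrArg Fin.val hc
      exact hne (Fin.ext h3)
    · exact hmix i i' h h'
    · exact (hmix i' i h' h).symm
    · rw [hC2 i h, hC2 i' h']
      exact Finset.disjoint_of_subset_left (Finset.erase_subset _ _)
        (Finset.disjoint_of_subset_right (Finset.erase_subset _ _) (hFd i i' hne))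
  have hCcov : Finset.univ.biUnion C = Finset.univ := by
    refine Finset.eq_univ_of_forall ?_
    intro z
    have hz : z ∈ Finset.univ.biUnion F := by rw [hFcov]; exact Finset.mem_univ z
    obtain ⟨i₁, _, hzi₁⟩ := Finset.mem_biUnion.1 hz
    have hfromA' : ∀ zz : Fin M, zz ∈ insert x (Finset.univ.biUnion A) →
        zz ∈ Finset.univ.biUnion C := by
      intro zz hzz
      rw [← hacov] at hzz
      obtain ⟨i₂, _, hzz2⟩ := Finset.mem_biUnion.1 hzz
      refine Finset.mem_biUnion.2 ⟨⟨i₂.1, lt_of_lt_of_le i₂.isLt hj⟩, Finset.mem_univ _, ?_⟩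
      rw [hC1 _ i₂.isLt]
      have : (⟨i₂.1, i₂.isLt⟩ : Fin j) = i₂ := Fin.ext rfl
      rw [this]
      exact hzz2
    by_cases h : (i₁ : ℕ) < j
    · refine hfromA' z (Finset.mem_insert_of_mem ?_)
      refine Finset.mem_biUnion.2 ⟨⟨i₁.1, h⟩, Finset.mem_univ _, ?_⟩
      rw [hAeqF i₁ h]
      exact hzi₁
    · by_cases hzx : z = x
      · exact hfromA' z (hzx ▸ Finset.mem_insert_self _ _)
      · refine Finset.mem_biUnion.2 ⟨i₁, Finset.mem_univ _, ?_⟩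
        rw [hC2 i₁ h]
        exact Finset.mem_erase.2 ⟨hzx, hzi₁⟩
  -- counting comparison
  have claim1 : ∀ c, a + 2 ≤ c →
      cnt (fun i => (C i).card) c = cnt (fun i => (F i).card) c := by
    intro c hc
    rw [cnt, cnt]
    congr 1
    ext i
    rw [Finset.mem_filter, Finset.mem_filter]
    by_cases hii : i = i0'
    · subst hii
      rw [hcard_i0]
      constructor
      · intro ⟨_, h2⟩; omega
      · intro ⟨_, h2⟩
        rw [← ha] at h2
        omega
    · by_cases hiq : i = q₀
      · subst hiq
        rw [hcard_q, ← hb]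
        constructor
        · intro ⟨_, h2⟩; omega
        · intro ⟨_, h2⟩; omega
      · by_cases h : (i : ℕ) < j
        · rw [hcard_lt i h hii]
        · rw [hcard_ge i h hiq]
  have claim2 : cnt (fun i => (C i).card) (a + 1)
      = cnt (fun i => (F i).card) (a + 1) + 1 := by
    rw [cnt, cnt]
    have hfe : Finset.univ.filter (fun i => a + 1 ≤ (C i).card)
        = insert i0' (Finset.univ.filter (fun i => a + 1 ≤ (F i).card)) := by
      ext i
      rw [Finset.mem_insert, Finset.mem_filter, Finset.mem_filter]
      by_cases hii : i = i0'
      · subst hii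
        rw [hcard_i0]
        simp
      · by_cases hiq : i = q₀
        · subst hiq
          rw [hcard_q, ← hb]
          constructor
          · intro ⟨_, h2⟩; omega
          · rintro (hc | ⟨_, h2⟩)
            · exact absurd hc.symm hi0q
            · omega
        · have hcc : (C i).card = (F i).card := by
            by_cases h : (i : ℕ) < j
            · exact hcard_lt i h hii
            · exact hcard_ge i h hiq
          rw [hcc]
          constructor
          · intro h
            exact Or.inr h
          · rintro (hc | hc)
            · exact absurd hc hii
            · exact hc
    rw [hfe, Finset.card_insert_of_notMem]
    rw [Finset.mem_filter, ← ha]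
    intro ⟨_, h2⟩
    omega
  -- sort C into an ordered partition
  obtain ⟨l'', G, hGpart, hGcnt⟩ := exists_ordered hCind hCd hCcov
  have hlexG := hlex l'' G hGpart
  -- extract the contradiction
  have hFanti : Antitone (fun i : Fin l => (F i).card) := fun i i' h => hFord i i' h
  have hGanti : Antitone (fun i : Fin l'' => (G i).card) :=
    fun i i' h => hGpart.2.2.2.2 i i' h
  set r := cnt (fun i : Fin l => (F i).card) (a + 1) with hr
  have hvchar : ∀ m c, 1 ≤ c →
      (c ≤ PartSizes G m ↔ m < cnt (fun i => (C i).card) c) := by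
    intro m c hc
    rw [partSizes_char hGanti hc m, hGcnt c hc]
  have huchar : ∀ m c, 1 ≤ c →
      (c ≤ PartSizes F m ↔ m < cnt (fun i : Fin l => (F i).card) c) :=
    fun m c hc => partSizes_char hFanti hc m
  have hagree : ∀ m, m < r → PartSizes G m = PartSizes F m := by
    intro m hm
    have hum : a + 1 ≤ PartSizes F m := (huchar m (a + 1) (by omega)).2 hm
    have hvm : a + 1 ≤ PartSizes G m := by
      refine (hvchar m (a + 1) (by omega)).2 ?_
      rw [claim2]
      omega
    by_contra hne
    rcases Nat.lt_or_ge (PartSizes G m) (PartSizes F m) with hlt2 | hge2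
    · set c := PartSizes G m + 1 with hcdef
      have h1 : c ≤ PartSizes F m := by omega
      have h2 : m < cnt (fun i : Fin l => (F i).card) c := (huchar m c (by omega)).1 h1
      have h3 : m < cnt (fun i => (C i).card) c := by
        rw [claim1 c (by omega)]
        exact h2
      have h4 : c ≤ PartSizes G m := (hvchar m c (by omega)).2 h3
      omega
    · have hlt2 : PartSizes F m < PartSizes G m := by omega
      set c := PartSizes F m + 1 with hcdef
      have h1 : c ≤ PartSizes G m := by omega
      have h3 : m < cnt (fun i => (C i).card) c := (hvchar m c (by omega)).1 h1
      have h2 : m < cnt (fun i : Fin l => (F i).card) c := by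
        rw [← claim1 c (by omega)]
        exact h3
      have h4 : c ≤ PartSizes F m := (huchar m c (by omega)).2 h2
      omega
  have hur : PartSizes F r ≤ a := by
    by_contra hc
    push_neg at hc
    have := (huchar r (a + 1) (by omega)).1 hc
    omega
  have hvr : a + 1 ≤ PartSizes G r := by
    refine (hvchar r (a + 1) (by omega)).2 ?_
    rw [claim2]
    omega
  rcases hlexG with heq | ⟨m, hmagree, hmlt⟩
  · have := congrFun heq r
    omega
  · rcases lt_trichotomy m r with h | h | h
    · have := hagree m h
      omega
    · subst h
      omega
    · have := hmagree r h
      omega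

end Directions

/-- An ordered partition `F` of `Φ` into linearly independent sets is a
fundamental partition if and only if it majorizes every ordered partition
`P = {P_1,…,P_k}` of `Φ` into linearly independent sets, i.e. `ℓ ≤ k` and all
partial sums of part sizes of `P` are dominated by those of `F`. -/
theorem isFundamental_iff_majorizes {K V : Type*} [Field K] [AddCommGroup V] [Module K V]
    {M ℓ : ℕ} (φ : Fin M → V) (F : Fin ℓ → Finset (Fin M))
    (hF : IsOrderedLIPartitionOn K φ Finset.univ F) :
    IsFundamentalOn K φ Finset.univ F ↔
      ∀ (k : ℕ) (P : Fin k → Finset (Fin M)),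
        IsOrderedLIPartitionOn K φ Finset.univ P →
          ℓ ≤ k ∧ ∀ j ≤ ℓ,
            ∑ i ∈ Finset.range j, PartSizes P i ≤ ∑ i ∈ Finset.range j, PartSizes F i := by
  constructor
  · intro hfund k P hP
    have hsums := sums_le_of_fundamental hfund k P hP
    refine ⟨?_, hsums⟩
    by_contra hc
    push_neg at hc
    have h1 : ∑ i ∈ Finset.range k, PartSizes P i = Finset.univ.card :=
      partSizes_sum hP.2.1 hP.2.2.1 le_rfl
    have h2 : ∑ i ∈ Finset.range ℓ, PartSizes F i = Finset.univ.card :=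
      partSizes_sum hF.2.1 hF.2.2.1 le_rfl
    have h3 := hsums k (by omega)
    have h4 : ∑ i ∈ Finset.range k, PartSizes F i
        + ∑ i ∈ Finset.Ico k ℓ, PartSizes F i
        = ∑ i ∈ Finset.range ℓ, PartSizes F i :=
      Finset.sum_range_add_sum_Ico _ (by omega)
    have h5 : 0 < PartSizes F k := by
      rw [PartSizes, dif_pos hc]
      exact Finset.card_pos.2 (hF.1 _)
    have h6 : PartSizes F k ≤ ∑ i ∈ Finset.Ico k ℓ, PartSizes F i :=
      Finset.single_le_sum (fun i _ => Nat.zero_le _) (Finset.mem_Ico.2 ⟨le_rfl, hc⟩)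
    omega
  · intro h
    refine ⟨hF, ?_⟩
    intro k P hP
    obtain ⟨hlk, hsums⟩ := h k P hP
    exact lexLE_of_major hF hP hlk hsums
end

section
/- Let {F_1,...,F_ℓ} be a fundamental partition of a finite family of vectors Φ = (φ_1,...,φ_M) in a vector space V. Then for all i ≤ j, span(F_j) ⊆ span(F_i). -/
lemma li_subfamily {K V : Type*} [Field K] [AddCommGroup V] [Module K V] {M : ℕ}
    (φ : Fin M → V) {s t : Finset (Fin M)} (hts : t ⊆ s)
    (hs : LinearIndependent K (fun z : {y : Fin M // y ∈ s} => φ z.1)) :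
    LinearIndependent K (fun z : {y : Fin M // y ∈ t} => φ z.1) := by
  exact hs.comp (fun z => ⟨z.1, hts z.2⟩)
    (fun _ _ hab => Subtype.ext (by have h := congrArg Subtype.val hab; exact h))

lemma li_insert {K V : Type*} [Field K] [AddCommGroup V] [Module K V] {M : ℕ}
    (φ : Fin M → V) {s : Finset (Fin M)} {x : Fin M}
    (hs : LinearIndependent K (fun z : {y : Fin M // y ∈ s} => φ z.1))
    (hx : φ x ∉ Submodule.span K (φ '' ↑s)) :
    LinearIndependent K (fun z : {y : Fin M // y ∈ insert x s} => φ z.1) := by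
  have hxs : x ∉ (s : Set (Fin M)) := fun h => hx (Submodule.subset_span ⟨x, h, rfl⟩)
  have hs' : LinearIndependent K (fun z : (s : Set (Fin M)) => φ z.1) := hs
  have h : LinearIndependent K (fun z : (insert x (s : Set (Fin M)) : Set (Fin M)) => φ z.1) :=
    (linearIndepOn_insert (f := φ) (s := (s : Set (Fin M))) (a := x) hxs).2 ⟨hs', hx⟩
  have hcoe : (insert x (s : Set (Fin M)) : Set (Fin M)) =
      ((insert x s : Finset (Fin M)) : Set (Fin M)) := (Finset.coe_insert x s).symm
  rw [hcoe] at h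
  exact h

lemma ordered_of_transfer {K V : Type*} [Field K] [AddCommGroup V] [Module K V]
    {M ℓ ℓ'' : ℕ} (φ : Fin M → V) (hle : ℓ'' ≤ ℓ) (Q : Fin ℓ → Finset (Fin M))
    (σ : Fin ℓ ≃ Fin ℓ)
    (hdisj : ∀ a b, a ≠ b → Disjoint (Q a) (Q b))
    (hcov : Finset.univ.biUnion Q = Finset.univ)
    (hli : ∀ k, LinearIndependent K (fun z : {y : Fin M // y ∈ Q k} => φ z.1))
    (hne : ∀ k : Fin ℓ, (k : ℕ) < ℓ'' → (Q (σ k)).Nonempty)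
    (hz : ∀ k : Fin ℓ, ℓ'' ≤ (k : ℕ) → Q (σ k) = ∅)
    (hmono : ∀ a b : Fin ℓ, a ≤ b → (Q (σ b)).card ≤ (Q (σ a)).card) :
    IsOrderedLIPartitionOn K φ Finset.univ (fun k : Fin ℓ'' => Q (σ (Fin.castLE hle k))) := by
  refine ⟨fun k => hne (Fin.castLE hle k) k.isLt, ?_, ?_, fun k => hli _,
    fun a b hab => hmono _ _ hab⟩
  · intro a b hab
    exact hdisj _ _ fun h => hab (Fin.castLE_injective hle (σ.injective h))
  · apply Finset.eq_univ_iff_forall.2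
    intro y
    have hy : y ∈ Finset.univ.biUnion Q := by rw [hcov]; exact Finset.mem_univ y
    obtain ⟨m, -, hym⟩ := Finset.mem_biUnion.1 hy
    by_cases hk : ((σ.symm m : Fin ℓ) : ℕ) < ℓ''
    · refine Finset.mem_biUnion.2 ⟨⟨((σ.symm m : Fin ℓ) : ℕ), hk⟩, Finset.mem_univ _, ?_⟩
      have heq : Fin.castLE hle ⟨((σ.symm m : Fin ℓ) : ℕ), hk⟩ = σ.symm m := Fin.ext rfl
      rw [heq, Equiv.apply_symm_apply]
      exact hym
    · exfalso
      have h0 := hz (σ.symm m) (not_lt.1 hk)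
      rw [Equiv.apply_symm_apply] at h0
      rw [h0] at hym
      exact absurd hym (Finset.notMem_empty y)

/-- In a fundamental partition `{F_1,…,F_ℓ}` of `Φ`, the spans are nested:
`span(F_j) ⊆ span(F_i)` whenever `i ≤ j`. -/
theorem span_antitone_of_fundamental {K V : Type*} [Field K] [AddCommGroup V] [Module K V]
    {M ℓ : ℕ} (φ : Fin M → V) (F : Fin ℓ → Finset (Fin M))
    (hF : IsFundamentalOn K φ Finset.univ F) {i j : Fin ℓ} (hij : i ≤ j) :
    Submodule.span K (φ '' ↑(F j)) ≤ Submodule.span K (φ '' ↑(F i)) := by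
  classical
  obtain ⟨⟨hne, hdisj, hcov, hli, hmono⟩, hmax⟩ := hF
  rw [Submodule.span_le]
  rintro v hv
  obtain ⟨x, hxj, rfl⟩ := hv
  by_contra hx
  have hxj : x ∈ F j := hxj
  have hxi : x ∉ F i := fun h => hx (Submodule.subset_span ⟨x, h, rfl⟩)
  have hij' : i ≠ j := fun h => hxi (h ▸ hxj)
  have hijlt : i < j := lt_of_le_of_ne hij hij'
  -- t : minimal index with same card as F i
  have hiT : i ∈ Finset.univ.filter (fun k => (F k).card = (F i).card) := by simp
  have hTne : (Finset.univ.filter (fun k => (F k).card = (F i).card)).Nonempty := ⟨i, hiT⟩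
  set t := (Finset.univ.filter (fun k => (F k).card = (F i).card)).min' hTne with htdef
  have hts : (F t).card = (F i).card :=
    (Finset.mem_filter.1 (Finset.min'_mem _ hTne)).2
  have hti : t ≤ i := Finset.min'_le _ i hiT
  have htlt : ∀ m : Fin ℓ, m < t → (F i).card < (F m).card := by
    intro m hm
    have h1 : (F i).card ≤ (F m).card := hmono m i (le_trans hm.le hti)
    rcases h1.lt_or_eq with h | h
    · exact h
    · exact absurd (Finset.min'_le _ m (by simp [h.symm])) (not_le.2 hm)
  -- u : maximal index with same card as F j
  have hjU : j ∈ Finset.univ.filter (fun k => (F k).card = (F j).card) := by simp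
  have hUne : (Finset.univ.filter (fun k => (F k).card = (F j).card)).Nonempty := ⟨j, hjU⟩
  set u := (Finset.univ.filter (fun k => (F k).card = (F j).card)).max' hUne with hudef
  have hus : (F u).card = (F j).card :=
    (Finset.mem_filter.1 (Finset.max'_mem _ hUne)).2
  have hju : j ≤ u := Finset.le_max' _ j hjU
  have hult : ∀ m : Fin ℓ, u < m → (F m).card < (F j).card := by
    intro m hm
    have h1 : (F m).card ≤ (F j).card := hmono j m (le_trans hju hm.le)
    rcases h1.lt_or_eq with h | h
    · exact h
    · exact absurd (Finset.le_max' _ m (by simp [h])) (not_le.2 hm)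
  have htu_lt : t < u := lt_of_le_of_lt hti (lt_of_lt_of_le hijlt hju)
  have htj : t ≠ j := ne_of_lt (lt_of_le_of_lt hti hijlt)
  have htu : t ≠ u := ne_of_lt htu_lt
  have hiu : i ≠ u := ne_of_lt (lt_of_lt_of_le hijlt hju)
  -- the modified parts
  set Q : Fin ℓ → Finset (Fin M) :=
    fun k => if k = i then insert x (F i) else if k = j then (F j).erase x else F k with hQdef
  have hQi : Q i = insert x (F i) := by rw [hQdef]; simp
  have hQj : Q j = (F j).erase x := by rw [hQdef]; simp [Ne.symm hij']
  have hQo : ∀ k, k ≠ i → k ≠ j → Q k = F k := by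
    intro k h1 h2; rw [hQdef]; simp [h1, h2]
  have hxF : ∀ k, k ≠ j → x ∉ F k := fun k hk h =>
    (Finset.disjoint_left.1 (hdisj k j hk)) h hxj
  have hQmem : ∀ (k) (y : Fin M), y ∈ Q k ↔ ((y = x ∧ k = i) ∨ (y ≠ x ∧ y ∈ F k)) := by
    intro k y
    by_cases hki : k = i
    · rw [hki, hQi, Finset.mem_insert]
      constructor
      · rintro (rfl | hy)
        · exact Or.inl ⟨rfl, rfl⟩
        · exact Or.inr ⟨fun h => hxi (h ▸ hy), hy⟩
      · rintro (⟨rfl, -⟩ | ⟨-, hy⟩)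
        exacts [Or.inl rfl, Or.inr hy]
    · by_cases hkj : k = j
      · rw [hkj, hQj, Finset.mem_erase]
        constructor
        · rintro ⟨h1, h2⟩; exact Or.inr ⟨h1, h2⟩
        · rintro (⟨-, h⟩ | ⟨h1, h2⟩)
          exacts [absurd h (Ne.symm hij'), ⟨h1, h2⟩]
      · rw [hQo k hki hkj]
        constructor
        · intro hy
          exact Or.inr ⟨fun h => hxF k hkj (h ▸ hy), hy⟩
        · rintro (⟨-, h⟩ | ⟨-, hy⟩)
          exacts [absurd h hki, hy]
  have hQdisj : ∀ a b, a ≠ b → Disjoint (Q a) (Q b) := by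
    intro a b hab
    rw [Finset.disjoint_left]
    intro y hya hyb
    rcases (hQmem a y).1 hya with ⟨rfl, rfl⟩ | ⟨hyx, hyFa⟩
    · rcases (hQmem b y).1 hyb with ⟨-, rfl⟩ | ⟨hyx, -⟩
      · exact hab rfl
      · exact hyx rfl
    · rcases (hQmem b y).1 hyb with ⟨rfl, -⟩ | ⟨-, hyFb⟩
      · exact hyx rfl
      · exact (Finset.disjoint_left.1 (hdisj a b hab)) hyFa hyFb
  have hQcov : Finset.univ.biUnion Q = Finset.univ := by
    apply Finset.eq_univ_iff_forall.2
    intro y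
    by_cases hyx : y = x
    · exact Finset.mem_biUnion.2 ⟨i, Finset.mem_univ _, (hQmem i y).2 (Or.inl ⟨hyx, rfl⟩)⟩
    · have hy : y ∈ Finset.univ.biUnion F := by rw [hcov]; exact Finset.mem_univ y
      obtain ⟨m, -, hym⟩ := Finset.mem_biUnion.1 hy
      exact Finset.mem_biUnion.2 ⟨m, Finset.mem_univ _, (hQmem m y).2 (Or.inr ⟨hyx, hym⟩)⟩
  have hQli : ∀ k, LinearIndependent K (fun z : {y : Fin M // y ∈ Q k} => φ z.1) := by
    intro k
    by_cases hki : k = i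
    · rw [hki, hQi]
      exact li_insert φ (hli i) hx
    · by_cases hkj : k = j
      · rw [hkj, hQj]
        exact li_subfamily φ (Finset.erase_subset x (F j)) (hli j)
      · rw [hQo k hki hkj]
        exact hli k
  have hQcard : ∀ k, (Q k).card =
      if k = i then (F i).card + 1 else if k = j then (F j).card - 1 else (F k).card := by
    intro k
    by_cases hki : k = i
    · rw [hki, hQi, if_pos rfl]
      exact Finset.card_insert_of_notMem hxi
    · by_cases hkj : k = j
      · rw [hkj, hQj, if_neg (Ne.symm hij'), if_pos rfl]
        exact Finset.card_erase_of_mem hxj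
      · rw [hQo k hki hkj, if_neg hki, if_neg hkj]
  set σ : Fin ℓ ≃ Fin ℓ := (Equiv.swap j u).trans (Equiv.swap t i) with hσdef
  have hσ : ∀ k : Fin ℓ, σ k =
      if k = t then i else if k = i then t else if k = j then u else if k = u then j else k := by
    intro k
    simp only [hσdef, Equiv.trans_apply]
    by_cases h1 : k = t
    · rw [h1, Equiv.swap_apply_of_ne_of_ne htj htu, Equiv.swap_apply_left, if_pos rfl]
    · by_cases h2 : k = i
      · rw [h2, Equiv.swap_apply_of_ne_of_ne hij' hiu, Equiv.swap_apply_right,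
          if_neg (fun h : i = t => h1 (h2.trans h)), if_pos rfl]
      · by_cases h3 : k = j
        · rw [h3, Equiv.swap_apply_left,
            Equiv.swap_apply_of_ne_of_ne (Ne.symm htu) (Ne.symm hiu),
            if_neg (fun h : j = t => h1 (h3.trans h)),
            if_neg (fun h : j = i => h2 (h3.trans h)), if_pos rfl]
        · by_cases h4 : k = u
          · rw [h4, Equiv.swap_apply_right,
              Equiv.swap_apply_of_ne_of_ne (Ne.symm htj) (Ne.symm hij'),
              if_neg (fun h : u = t => h1 (h4.trans h)),
              if_neg (fun h : u = i => h2 (h4.trans h)),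
              if_neg (fun h : u = j => h3 (h4.trans h)), if_pos rfl]
          · rw [Equiv.swap_apply_of_ne_of_ne h3 h4, Equiv.swap_apply_of_ne_of_ne h1 h2,
              if_neg h1, if_neg h2, if_neg h3, if_neg h4]
  have hccard : ∀ k : Fin ℓ, (Q (σ k)).card =
      if k = t then (F i).card + 1 else if k = u then (F j).card - 1 else (F k).card := by
    intro k
    rw [hσ k]
    by_cases h1 : k = t
    · rw [if_pos h1, if_pos h1, hQi, Finset.card_insert_of_notMem hxi]
    · by_cases h2 : k = i
      · have hit : t ≠ i := fun h => h1 (h2.trans h.symm)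
        have hku : k ≠ u := fun h => hiu (h2.symm.trans h)
        rw [if_neg h1, if_pos h2, hQo t hit htj, if_neg h1, if_neg hku, h2, hts]
      · by_cases h3 : k = j
        · by_cases huj : u = j
          · have hku : k = u := h3.trans huj.symm
            rw [if_neg h1, if_neg h2, if_pos h3, if_neg h1, if_pos hku, huj, hQj,
              Finset.card_erase_of_mem hxj]
          · have hku : k ≠ u := fun h => huj (h.symm.trans h3)
            rw [if_neg h1, if_neg h2, if_pos h3, hQo u (Ne.symm hiu) huj, if_neg h1,
              if_neg hku, hus, h3]
        · by_cases h4 : k = u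
          · rw [if_neg h1, if_neg h2, if_neg h3, if_pos h4, hQj,
              Finset.card_erase_of_mem hxj, if_neg h1, if_pos h4]
          · rw [if_neg h1, if_neg h2, if_neg h3, if_neg h4, hQo k h2 h3, if_neg h1, if_neg h4]
  have hσu : σ u = j := by
    rw [hσ u, if_neg (Ne.symm htu), if_neg (Ne.symm hiu)]
    by_cases huj : u = j
    · rw [if_pos huj, huj]
    · rw [if_neg huj, if_pos rfl]
  have hcmono : ∀ a b : Fin ℓ, a ≤ b → (Q (σ b)).card ≤ (Q (σ a)).card := by
    intro a b hab
    rw [hccard a, hccard b]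
    by_cases hbt : b = t
    · by_cases hat : a = t
      · rw [if_pos hat, if_pos hbt]
      · have halt : a < t := lt_of_le_of_ne (hbt ▸ hab) hat
        have hau : a ≠ u := ne_of_lt (lt_trans halt htu_lt)
        rw [if_pos hbt, if_neg hat, if_neg hau]
        have := htlt a halt
        omega
    · by_cases hbu : b = u
      · by_cases hat : a = t
        · rw [if_neg hbt, if_pos hbu, if_pos hat]
          have := hmono i j hij
          omega
        · by_cases hau : a = u
          · rw [if_neg hbt, if_pos hbu, if_neg hat, if_pos hau]
          · rw [if_neg hbt, if_pos hbu, if_neg hat, if_neg hau]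
            have h1 : (F u).card ≤ (F a).card := hmono a u (hbu ▸ hab)
            omega
      · by_cases hat : a = t
        · rw [if_neg hbt, if_neg hbu, if_pos hat]
          have h1 : (F b).card ≤ (F t).card := hmono t b (hat ▸ hab)
          omega
        · by_cases hau : a = u
          · have hub : u < b := lt_of_le_of_ne (hau ▸ hab) (fun h => hbu h.symm)
            rw [if_neg hbt, if_neg hbu, if_neg hat, if_pos hau]
            have := hult b hub
            omega
          · rw [if_neg hbt, if_neg hbu, if_neg hat, if_neg hau]
            exact hmono a b hab
  have hQne : ∀ k, k ≠ j → (Q k).Nonempty := by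
    intro k hk
    by_cases hki : k = i
    · rw [hki, hQi]
      exact Finset.insert_nonempty x (F i)
    · rw [hQo k hki hk]
      exact hne k
  have hkey : ∃ (ℓ'' : ℕ) (hle : ℓ'' ≤ ℓ), (t : ℕ) < ℓ'' ∧
      (∀ k : Fin ℓ, ℓ'' ≤ (k : ℕ) → Q (σ k) = ∅) ∧
      (∀ k : Fin ℓ, (k : ℕ) < ℓ'' → (Q (σ k)).Nonempty) := by
    by_cases hsj : 2 ≤ (F j).card
    · refine ⟨ℓ, le_refl _, t.isLt, fun k hk => absurd k.isLt (not_lt.2 hk), fun k _ => ?_⟩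
      by_cases hkj : σ k = j
      · rw [hkj]
        have h : (Q j).card = (F j).card - 1 := by
          rw [hQcard, if_neg (Ne.symm hij'), if_pos rfl]
        exact Finset.card_pos.1 (by omega)
      · exact hQne _ hkj
    · have hsj1 : (F j).card = 1 := by
        have := Finset.card_pos.2 (hne j); omega
      have hFj : F j = {x} := by
        obtain ⟨a, ha⟩ := Finset.card_eq_one.1 hsj1
        have hxa : x = a := Finset.mem_singleton.1 (ha ▸ hxj)
        rw [ha, hxa]
      have hQjE : Q j = ∅ := by
        rw [hQj, hFj, Finset.erase_singleton]
      have hu_top : ∀ m : Fin ℓ, m ≤ u := by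
        intro m
        by_contra hm
        have h1 := hult m (not_le.1 hm)
        have h2 := Finset.card_pos.2 (hne m)
        omega
      have huval : (u : ℕ) = ℓ - 1 := by
        have h1 := u.isLt
        have h2 : (ℓ - 1 : ℕ) ≤ (u : ℕ) := hu_top ⟨ℓ - 1, by omega⟩
        omega
      refine ⟨ℓ - 1, Nat.sub_le _ _, ?_, ?_, ?_⟩
      · have h1 : (t : ℕ) < (u : ℕ) := htu_lt
        omega
      · intro k hk
        have hk' : k = u := Fin.ext (by have := k.isLt; omega)
        rw [hk', hσu, hQjE]
      · intro k hk
        have hkne : σ k ≠ j := by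
          intro h
          have hku : k = u := σ.injective (by rw [h, hσu])
          rw [hku] at hk
          omega
        exact hQne _ hkne
  obtain ⟨ℓ'', hle, htℓ, hz, hne''⟩ := hkey
  have hP := ordered_of_transfer (K := K) φ hle Q σ hQdisj hQcov hQli hne'' hz hcmono
  have hlex := hmax ℓ'' _ hP
  set P : Fin ℓ'' → Finset (Fin M) := fun k => Q (σ (Fin.castLE hle k)) with hPdef
  have hPsz : ∀ (n : ℕ) (hn : n < ℓ''),
      PartSizes P n = (Q (σ (Fin.castLE hle ⟨n, hn⟩))).card := by
    intro n hn
    simp only [PartSizes, hPdef]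
    rw [dif_pos hn]
  have hFsz : ∀ (n : ℕ) (hn : n < ℓ), PartSizes F n = (F ⟨n, hn⟩).card := by
    intro n hn
    simp only [PartSizes]
    rw [dif_pos hn]
  have key1 : ∀ m : ℕ, m < (t : ℕ) → PartSizes P m = PartSizes F m := by
    intro m hm
    have hmℓ'' : m < ℓ'' := lt_trans hm htℓ
    have hmℓ : m < ℓ := lt_of_lt_of_le hmℓ'' hle
    rw [hPsz m hmℓ'', hFsz m hmℓ]
    have hmt : (⟨m, hmℓ⟩ : Fin ℓ) ≠ t := by
      intro h
      have h' : m = (t : ℕ) := by simpa using congrArg Fin.val h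
      omega
    have hmu : (⟨m, hmℓ⟩ : Fin ℓ) ≠ u := by
      intro h
      have h1 : m = (u : ℕ) := by simpa using congrArg Fin.val h
      have h2 : (t : ℕ) < (u : ℕ) := htu_lt
      omega
    have hcast : Fin.castLE hle (⟨m, hmℓ''⟩ : Fin ℓ'') = (⟨m, hmℓ⟩ : Fin ℓ) := Fin.ext rfl
    rw [hcast, hccard, if_neg hmt, if_neg hmu]
  have key2 : PartSizes F (t : ℕ) < PartSizes P (t : ℕ) := by
    have htℓ' : (t : ℕ) < ℓ := t.isLt
    rw [hPsz _ htℓ, hFsz _ htℓ']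
    have hcast : Fin.castLE hle (⟨(t : ℕ), htℓ⟩ : Fin ℓ'') = t := Fin.ext rfl
    have heta : (⟨(t : ℕ), htℓ'⟩ : Fin ℓ) = t := Fin.ext rfl
    rw [hcast, heta, hccard, if_pos rfl]
    omega
  rcases hlex with heq | ⟨n, hagree, hlt⟩
  · rw [heq] at key2
    exact lt_irrefl _ key2
  · rcases lt_trichotomy n (t : ℕ) with hn | hn | hn
    · rw [key1 n hn] at hlt
      exact lt_irrefl _ hlt
    · rw [hn] at hlt
      exact lt_asymm key2 hlt
    · rw [hagree _ hn] at key2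
      exact lt_irrefl _ key2
end

section
/- Let {F_1,...,F_ℓ} be a fundamental partition of a finite family of vectors Φ = (φ_1,...,φ_M) in a vector space V. Pick any vector φ_ℓ ∈ F_ℓ, let S_{ℓ-1} ⊆ F_{ℓ-1} be a smallest subset such that φ_ℓ ∈ span(S_{ℓ-1}), fix j ≤ ℓ-1, and let S_j be a smallest subset of F_j such that span(S_{ℓ-1}) ⊆ span(S_j). Then span(S_j) ⊆ span(F_i) for every i = 1,...,ℓ-1. -/
section LAhelpers
variable {K V : Type*} [Field K] [AddCommGroup V] [Module K V] {M : ℕ}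

/-- Linear independence of the subfamily of `φ` indexed by a finset. -/
def LIon (K : Type*) {V : Type*} [Field K] [AddCommGroup V] [Module K V] {M : ℕ}
    (φ : Fin M → V) (S : Finset (Fin M)) : Prop :=
  LinearIndependent K (fun x : {y : Fin M // y ∈ S} => φ x.1)

lemma sp_mono (φ : Fin M → V) {S T : Finset (Fin M)} (h : S ⊆ T) :
    Submodule.span K (φ '' ↑S) ≤ Submodule.span K (φ '' ↑T) :=
  Submodule.span_mono (Set.image_mono (by exact_mod_cast h))

lemma mem_sp (φ : Fin M → V) {S : Finset (Fin M)} {x : Fin M} (h : x ∈ S) :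
    φ x ∈ Submodule.span K (φ '' ↑S) :=
  Submodule.subset_span ⟨x, by simpa using h, rfl⟩

lemma LIon.subset {φ : Fin M → V} {S T : Finset (Fin M)} (h : LIon K φ T) (hST : S ⊆ T) :
    LIon K φ S := by
  have : LinearIndependent K ((fun x : {y : Fin M // y ∈ T} => φ x.1) ∘
      (fun x : {y : Fin M // y ∈ S} => (⟨x.1, hST x.2⟩ : {y : Fin M // y ∈ T}))) :=
    h.comp _ (fun a b hab => Subtype.ext (by simpa using congrArg Subtype.val hab))
  exact this

lemma LIon.injOn {φ : Fin M → V} {S : Finset (Fin M)} (h : LIon K φ S) :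
    Set.InjOn φ ↑S := by
  intro a ha b hb hab
  have : (⟨a, ha⟩ : {y : Fin M // y ∈ S}) = ⟨b, hb⟩ := h.injective hab
  exact congrArg Subtype.val this

lemma LIon.toSet {φ : Fin M → V} {S : Finset (Fin M)} (h : LIon K φ S) :
    LinearIndependent K (fun x : ↑(φ '' ↑S) => (x : V)) :=
  (linearIndepOn_iff_image h.injOn).mp h

lemma LIon.insert {φ : Fin M → V} {S : Finset (Fin M)} {x : Fin M} (h : LIon K φ S)
    (hx : φ x ∉ Submodule.span K (φ '' ↑S)) : LIon K φ (Insert.insert x S) := by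
  have hxS : x ∉ S := fun hxS => hx (mem_sp φ hxS)
  have hφx : φ x ∉ φ '' ↑S := fun hmem => hx (Submodule.subset_span hmem)
  have h1 : LinearIndependent K (fun b : ↑(Insert.insert (φ x) (φ '' ↑S)) => (b : V)) := by
    refine (linearIndepOn_id_insert hφx).mpr ?_
    exact ⟨h.toSet, hx⟩
  have hinj : Set.InjOn φ ↑(Insert.insert x S) := by
    rw [Finset.coe_insert]
    intro a ha b hb hab
    rcases ha with rfl | ha <;> rcases hb with rfl | hb
    · rfl
    · exact absurd (hab ▸ Set.mem_image_of_mem φ hb) hφx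
    · exact absurd (hab ▸ Set.mem_image_of_mem φ ha) hφx
    · exact h.injOn ha hb hab
  have himg : φ '' ↑(Insert.insert x S) = Insert.insert (φ x) (φ '' ↑S) := by
    rw [Finset.coe_insert, Set.image_insert_eq]
  rw [LIon, show (fun y : Fin M => y ∈ Insert.insert x S) = _ from rfl]
  exact (linearIndepOn_iff_image hinj).mpr (himg ▸ h1)

lemma sp_inter {φ : Fin M → V} {T A B : Finset (Fin M)} (h : LIon K φ T)
    (hA : A ⊆ T) (hB : B ⊆ T) :
    Submodule.span K (φ '' ↑A) ⊓ Submodule.span K (φ '' ↑B) ≤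
      Submodule.span K (φ '' ↑(A ∩ B)) := by
  intro w hw
  obtain ⟨hwA, hwB⟩ := hw
  have hsplit : (↑A : Set (Fin M)) = ↑(A ∩ B) ∪ ↑(A \ B) := by
    ext v; simp only [Finset.coe_inter, Finset.coe_sdiff, Set.mem_union, Set.mem_inter_iff,
      Set.mem_diff, Finset.mem_coe]; tauto
  have hAspan : Submodule.span K (φ '' ↑A) =
      Submodule.span K (φ '' ↑(A ∩ B)) ⊔ Submodule.span K (φ '' ↑(A \ B)) := by
    rw [← Submodule.span_union, ← Set.image_union, ← hsplit]
  rw [hAspan] at hwA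
  obtain ⟨p, hp, q, hq, rfl⟩ := Submodule.mem_sup.mp hwA
  have hq2 : q ∈ Submodule.span K (φ '' ↑B) := by
    have : q = (p + q) - p := by abel
    rw [this]
    exact Submodule.sub_mem _ hwB (sp_mono φ (Finset.inter_subset_right) hp)
  have hdisj : Disjoint (Submodule.span K (φ '' ↑(A \ B))) (Submodule.span K (φ '' ↑B)) := by
    have hATset : (φ '' ↑(A \ B)) = (fun x : {y : Fin M // y ∈ T} => φ x.1) ''
        {x : {y : Fin M // y ∈ T} | x.1 ∈ A \ B} := by
      ext v; constructor
      · rintro ⟨a, ha, rfl⟩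
        exact ⟨⟨a, hA (Finset.mem_sdiff.mp (by exact_mod_cast ha)).1⟩, by exact_mod_cast ha, rfl⟩
      · rintro ⟨a, ha, rfl⟩
        exact ⟨a.1, by exact_mod_cast ha, rfl⟩
    have hBset : (φ '' ↑B) = (fun x : {y : Fin M // y ∈ T} => φ x.1) ''
        {x : {y : Fin M // y ∈ T} | x.1 ∈ B} := by
      ext v; constructor
      · rintro ⟨a, ha, rfl⟩
        exact ⟨⟨a, hB (by exact_mod_cast ha)⟩, by exact_mod_cast ha, rfl⟩
      · rintro ⟨a, ha, rfl⟩
        exact ⟨a.1, by exact_mod_cast ha, rfl⟩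
    rw [hATset, hBset]
    exact h.disjoint_span_image (by
      rw [Set.disjoint_left]
      rintro a ha hb
      exact absurd (Finset.mem_sdiff.mp ha).2 (not_not_intro hb))
  have : q = 0 := by
    have := hdisj.le_bot ⟨hq, hq2⟩
    simpa using this
  simpa [this] using hp

end LAhelpers

def sigmaFun (i' I D D'' : ℕ) (n : ℕ) : ℕ :=
  if n < i' then n else if n = i' then I else if n ≤ I then n-1 else
  if n < D then n else if n < D'' then n+1 else if n = D'' then D else n

def eFun (d : ℕ → ℕ) (i' I D D'' : ℕ) (n : ℕ) : ℕ :=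
  if n < i' then d n else if n = i' then d I + 1 else if n ≤ I then d (n-1) else
  if n < D then d n else if n < D'' then d (n+1) else if n = D'' then d D - 1 else d n

lemma sigmaFun_lt {i' I D D'' ℓ : ℕ} (h1 : i' ≤ I) (h2 : I < D) (h3 : D ≤ D'') (h4 : D'' < ℓ) :
    ∀ n, n < ℓ → sigmaFun i' I D D'' n < ℓ := by
  intro n h; unfold sigmaFun; split_ifs <;> omega

lemma sigmaFun_inj {i' I D D'' ℓ : ℕ} (h1 : i' ≤ I) (h2 : I < D) (h3 : D ≤ D'') (h4 : D'' < ℓ) :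
    ∀ a b, a < ℓ → b < ℓ → sigmaFun i' I D D'' a = sigmaFun i' I D D'' b → a = b := by
  intro a b ha hb hab
  unfold sigmaFun at hab
  split_ifs at hab <;> omega

lemma sigmaFun_surj {i' I D D'' ℓ : ℕ} (h1 : i' ≤ I) (h2 : I < D) (h3 : D ≤ D'') (h4 : D'' < ℓ) :
    ∀ a, a < ℓ → ∃ n, n < ℓ ∧ sigmaFun i' I D D'' n = a := by
  intro a ha
  by_cases c1 : a < i'
  · exact ⟨a, by omega, by unfold sigmaFun; split_ifs <;> omega⟩
  by_cases c2 : a < I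
  · exact ⟨a+1, by omega, by unfold sigmaFun; split_ifs <;> omega⟩
  by_cases c3 : a = I
  · exact ⟨i', by omega, by unfold sigmaFun; split_ifs <;> omega⟩
  by_cases c4 : a < D
  · exact ⟨a, by omega, by unfold sigmaFun; split_ifs <;> omega⟩
  by_cases c5 : a = D
  · exact ⟨D'', by omega, by unfold sigmaFun; split_ifs <;> omega⟩
  by_cases c6 : a ≤ D''
  · exact ⟨a-1, by omega, by unfold sigmaFun; split_ifs <;> omega⟩
  · exact ⟨a, by omega, by unfold sigmaFun; split_ifs <;> omega⟩

lemma sigmaFun_atD2 {i' I D D'' : ℕ} (h1 : i' ≤ I) (h2 : I < D) (h3 : D ≤ D'') :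
    sigmaFun i' I D D'' D'' = D := by
  unfold sigmaFun; split_ifs <;> omega

set_option maxHeartbeats 1000000 in
lemma partSizes_eq (d : ℕ → ℕ) (i' I D D'' ℓ k' : ℕ)
    (h1 : i' ≤ I) (h2 : I < D) (h3 : D ≤ D'') (h4 : D'' < ℓ)
    (hzero : ∀ n, ℓ ≤ n → d n = 0)
    (hcase : (k' = ℓ ∧ 2 ≤ d D) ∨ (k' = ℓ - 1 ∧ d D = 1 ∧ D'' = ℓ - 1)) :
    ∀ n, (if n < k' then
        d (sigmaFun i' I D D'' n) + (if sigmaFun i' I D D'' n = I then 1 else 0)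
          - (if sigmaFun i' I D D'' n = D then 1 else 0)
      else 0) = eFun d i' I D D'' n := by
  intro n
  have hz := hzero n
  have hz1 := hzero (n+1)
  unfold sigmaFun eFun
  split_ifs <;> omega

section eFacts
variable (d : ℕ → ℕ) (i' I D D'' : ℕ)

lemma eFun_lt : ∀ n, n < i' → eFun d i' I D D'' n = d n := by
  intro n hn; unfold eFun; rw [if_pos hn]

lemma eFun_i' (h1 : i' ≤ I) (h2 : I < D) (h3 : D ≤ D'') :
    eFun d i' I D D'' i' = d I + 1 := by
  unfold eFun; split_ifs <;> omega

lemma eFun_atD2 (h1 : i' ≤ I) (h2 : I < D) (h3 : D ≤ D'') :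
    eFun d i' I D D'' D'' = d D - 1 := by
  unfold eFun; split_ifs <;> omega

lemma eFun_after (h1 : i' ≤ I) (h2 : I < D) (h3 : D ≤ D'') :
    ∀ n, D'' < n → eFun d i' I D D'' n = d n := by
  intro n hn; unfold eFun; split_ifs <;> omega

lemma eFun_ub (h1 : i' ≤ I) (h2 : I < D) (h3 : D ≤ D'')
    (hanti : ∀ a b, a ≤ b → d b ≤ d a)
    (hbefore : ∀ n, n < i' → d I < d n)
    (hrD : ∀ n, D ≤ n → n ≤ D'' → d n = d D) :
    ∀ n, eFun d i' I D D'' (n+1) ≤ d n := by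
  intro n
  have B := hbefore n
  have rD := hrD n
  have m1 : d (n+1) ≤ d n := hanti n (n+1) (by omega)
  have m2 : d (n+1+1) ≤ d n := hanti n (n+1+1) (by omega)
  have c3 : n ≤ D → d D ≤ d n := fun h => hanti n D h
  have cI : n+1 ≤ I → d I ≤ d n := fun h => hanti n I (by omega)
  unfold eFun
  simp only [Nat.add_sub_cancel]
  split_ifs <;> omega

lemma eFun_lb (h1 : i' ≤ I) (h2 : I < D) (h3 : D ≤ D'')
    (hanti : ∀ a b, a ≤ b → d b ≤ d a)
    (hrI : ∀ n, i' ≤ n → n ≤ I → d n = d I)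
    (hrD : ∀ n, D ≤ n → n ≤ D'' → d n = d D) :
    ∀ n, n < D'' → d n ≤ eFun d i' I D D'' n := by
  intro n hn
  have RIn := hrI n
  have RDn := hrD n
  have RD1 := hrD (n+1)
  have m1 : d n ≤ d (n-1) := hanti (n-1) n (by omega)
  unfold eFun
  split_ifs <;> omega

lemma eFun_antitone (h1 : i' ≤ I) (h2 : I < D) (h3 : D ≤ D'')
    (hanti : ∀ a b, a ≤ b → d b ≤ d a)
    (hbefore : ∀ n, n < i' → d I < d n)
    (hrI : ∀ n, i' ≤ n → n ≤ I → d n = d I)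
    (hrD : ∀ n, D ≤ n → n ≤ D'' → d n = d D)
    (hafter : ∀ n, D'' < n → d n < d D) :
    ∀ n, eFun d i' I D D'' (n+1) ≤ eFun d i' I D D'' n := by
  intro n
  rcases lt_trichotomy n D'' with hc | hceq | hc
  · exact le_trans (eFun_ub d i' I D D'' h1 h2 h3 hanti hbefore hrD n)
      (eFun_lb d i' I D D'' h1 h2 h3 hanti hrI hrD n hc)
  · rw [hceq]
    rw [eFun_atD2 d i' I D D'' h1 h2 h3, eFun_after d i' I D D'' h1 h2 h3 (D''+1) (by omega)]
    have := hafter (D''+1) (by omega)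
    omega
  · rw [eFun_after d i' I D D'' h1 h2 h3 (n+1) (by omega),
      eFun_after d i' I D D'' h1 h2 h3 n hc]
    exact hanti n (n+1) (by omega)

lemma eFun_pos (ℓ k' : ℕ) (h1 : i' ≤ I) (h2 : I < D) (h3 : D ≤ D'') (h4 : D'' < ℓ)
    (hanti : ∀ a b, a ≤ b → d b ≤ d a)
    (hbefore : ∀ n, n < i' → d I < d n)
    (hrI : ∀ n, i' ≤ n → n ≤ I → d n = d I)
    (hrD : ∀ n, D ≤ n → n ≤ D'' → d n = d D)
    (hpos : ∀ n, n < ℓ → 1 ≤ d n)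
    (hcase : (k' = ℓ ∧ 2 ≤ d D) ∨ (k' = ℓ - 1 ∧ d D = 1 ∧ D'' = ℓ - 1)) :
    ∀ n, n < k' → 1 ≤ eFun d i' I D D'' n := by
  intro n hn
  have B0 := hbefore n
  have RI2 := hrI (n-1); have RD1 := hrD (n+1)
  have c1 : n ≤ D → d D ≤ d n := fun h => hanti n D h
  have mID : d D ≤ d I := hanti I D (by omega)
  have hp := hpos n
  have hpD := hpos D (by omega)
  unfold eFun
  split_ifs <;> omega

end eFacts

lemma lex_contra {a b : ℕ → ℕ} {n : ℕ} (h1 : ∀ m, m < n → a m = b m) (h2 : b n < a n) :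
    ¬ LexLE a b := by
  rintro (rfl | ⟨n', hpre, hlt⟩)
  · omega
  · rcases lt_trichotomy n n' with h | rfl | h
    · have := hpre n h; omega
    · omega
    · have := h1 n' h; omega

/-- Key lemma: a fundamental partition admits no exchange that moves one index from
part `D` to part `I < D`. -/
lemma no_improving_exchange {K V : Type*} [Field K] [AddCommGroup V] [Module K V]
    {M ℓ : ℕ} {φ : Fin M → V} {Ω : Finset (Fin M)} {F : Fin ℓ → Finset (Fin M)}
    (hF : IsFundamentalOn K φ Ω F)
    (G : Fin ℓ → Finset (Fin M)) (I D : Fin ℓ) (hID : I < D)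
    (hdisj : ∀ a b : Fin ℓ, a ≠ b → Disjoint (G a) (G b))
    (hcover : Finset.univ.biUnion G = Ω)
    (hli : ∀ a, LinearIndependent K (fun x : {y : Fin M // y ∈ G a} => φ x.1))
    (hcard : ∀ a, (G a).card + (if a = D then 1 else 0) = (F a).card + (if a = I then 1 else 0)) :
    False := by
  obtain ⟨⟨hne, hdj, hcov, hliF, hmono⟩, hmax⟩ := hF
  set d := PartSizes F with hd
  have hd1 : ∀ (n : ℕ) (h : n < ℓ), d n = (F ⟨n, h⟩).card := by
    intro n h; simp only [hd, PartSizes, dif_pos h]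
  have hzero : ∀ n, ℓ ≤ n → d n = 0 := by
    intro n h; simp only [hd, PartSizes]; rw [dif_neg (by omega)]
  have hdpos : ∀ n, n < ℓ → 1 ≤ d n := by
    intro n h; rw [hd1 n h]; exact Finset.card_pos.mpr (hne _)
  have hanti : ∀ a b, a ≤ b → d b ≤ d a := by
    intro a b hab
    rcases Nat.lt_or_ge b ℓ with hb | hb
    · rw [hd1 a (by omega), hd1 b hb]
      exact hmono ⟨a, by omega⟩ ⟨b, hb⟩ (by simp [Fin.mk_le_mk]; omega)
    · rw [hzero b hb]; exact Nat.zero_le _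
  have hIl : (I:ℕ) < ℓ := I.2
  have hDl : (D:ℕ) < ℓ := D.2
  have hIDn : (I:ℕ) < (D:ℕ) := hID
  have hex : ∃ n, d n = d (I:ℕ) := ⟨(I:ℕ), rfl⟩
  set i' := Nat.find hex with hi'
  have hdi' : d i' = d (I:ℕ) := Nat.find_spec hex
  have h1' : i' ≤ (I:ℕ) := Nat.find_min' hex rfl
  have hbefore : ∀ n, n < i' → d (I:ℕ) < d n := by
    intro n hn
    have hne' : d n ≠ d (I:ℕ) := Nat.find_min hex hn
    have hle : d (I:ℕ) ≤ d n := hanti n (I:ℕ) (by omega)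
    omega
  set D'' := Nat.findGreatest (fun n => d n = d (D:ℕ)) (ℓ - 1) with hD2
  have hD''le : D'' ≤ ℓ - 1 := Nat.findGreatest_le _
  have h3' : (D:ℕ) ≤ D'' := Nat.le_findGreatest (by omega) rfl
  have h4 : D'' < ℓ := by omega
  have hafter : ∀ n, D'' < n → d n < d (D:ℕ) := by
    intro n hn
    rcases Nat.lt_or_ge n ℓ with h | h
    · have hne' := Nat.findGreatest_is_greatest (P := fun n => d n = d (D:ℕ)) hn (by omega)
      have hle : d n ≤ d (D:ℕ) := hanti (D:ℕ) n (by omega)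
      omega
    · rw [hzero n h]; have := hdpos (D:ℕ) hDl; omega
  have hrI : ∀ n, i' ≤ n → n ≤ (I:ℕ) → d n = d (I:ℕ) := fun n hn1 hn2 =>
    le_antisymm (hdi' ▸ hanti i' n hn1) (hanti n (I:ℕ) hn2)
  have hrD : ∀ n, (D:ℕ) ≤ n → n ≤ D'' → d n = d (D:ℕ) := by
    intro n hn1 hn2
    have hsp : d D'' = d (D:ℕ) := by
      rw [hD2]
      exact Nat.findGreatest_spec (P := fun n => d n = d (D:ℕ)) (m := (D:ℕ)) (by omega) rfl
    exact le_antisymm (hanti (D:ℕ) n hn1) (hsp ▸ hanti n D'' hn2)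
  set k' := if d (D:ℕ) = 1 then ℓ - 1 else ℓ with hk'
  have hcase : (k' = ℓ ∧ 2 ≤ d (D:ℕ)) ∨ (k' = ℓ - 1 ∧ d (D:ℕ) = 1 ∧ D'' = ℓ - 1) := by
    by_cases h : d (D:ℕ) = 1
    · right
      refine ⟨by simp [hk', h], h, ?_⟩
      by_contra hne'
      have hlt : D'' < ℓ - 1 := by omega
      have h5 := hafter (ℓ-1) hlt
      have h6 := hdpos (ℓ-1) (by omega)
      omega
    · left
      exact ⟨by simp [hk', h], by have := hdpos (D:ℕ) hDl; omega⟩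
  have hk'le : k' ≤ ℓ := by rcases hcase with ⟨h,_⟩|⟨h,_⟩ <;> omega
  have hGcard : ∀ a : Fin ℓ, (G a).card = d (a:ℕ) + (if (a:ℕ) = (I:ℕ) then 1 else 0)
      - (if (a:ℕ) = (D:ℕ) then 1 else 0) := by
    intro a
    have hc := hcard a
    have hfa : (F a).card = d (a:ℕ) := (hd1 a.1 a.2).symm
    by_cases haI : a = I <;> by_cases haD : a = D
    · exact absurd (haI.symm.trans haD) (ne_of_lt hID)
    · rw [if_pos haI, if_neg haD] at hc
      rw [if_pos (by rw [haI]), if_neg (fun h => haD (Fin.ext h))]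
      omega
    · rw [if_neg haI, if_pos haD] at hc
      rw [if_neg (fun h => haI (Fin.ext h)), if_pos (by rw [haD])]
      omega
    · rw [if_neg haI, if_neg haD] at hc
      rw [if_neg (fun h => haI (Fin.ext h)), if_neg (fun h => haD (Fin.ext h))]
      omega
  -- the rearranged partition
  set P : Fin k' → Finset (Fin M) := fun k =>
    G ⟨sigmaFun i' (I:ℕ) (D:ℕ) D'' k.1,
      sigmaFun_lt h1' hIDn h3' h4 k.1 (lt_of_lt_of_le k.2 hk'le)⟩ with hP
  have hPS : ∀ n, PartSizes P n = eFun d i' (I:ℕ) (D:ℕ) D'' n := by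
    intro n
    rw [← partSizes_eq d i' (I:ℕ) (D:ℕ) D'' ℓ k' h1' hIDn h3' h4 hzero hcase n]
    unfold PartSizes
    by_cases h : n < k'
    · rw [dif_pos h, if_pos h, hP]
      exact hGcard _
    · rw [dif_neg h, if_neg h]
  have hPcard : ∀ k : Fin k', (P k).card = eFun d i' (I:ℕ) (D:ℕ) D'' k.1 := by
    intro k
    rw [← hPS k.1]
    unfold PartSizes
    rw [dif_pos k.2]
  have hPpart : IsOrderedLIPartitionOn K φ Ω P := by
    refine ⟨?_, ?_, ?_, ?_, ?_⟩
    · intro k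
      rw [← Finset.card_pos, hPcard k]
      exact eFun_pos d i' (I:ℕ) (D:ℕ) D'' ℓ k' h1' hIDn h3' h4 hanti hbefore hrI hrD hdpos
        hcase k.1 k.2
    · intro a b hab
      rw [hP]
      refine hdisj _ _ (fun heq => hab ?_)
      have hval : sigmaFun i' (I:ℕ) (D:ℕ) D'' a.1 = sigmaFun i' (I:ℕ) (D:ℕ) D'' b.1 :=
        congrArg Fin.val heq
      exact Fin.ext (sigmaFun_inj h1' hIDn h3' h4 a.1 b.1
        (lt_of_lt_of_le a.2 hk'le) (lt_of_lt_of_le b.2 hk'le) hval)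
    · rw [← hcover]
      ext v
      simp only [Finset.mem_biUnion, Finset.mem_univ, true_and]
      constructor
      · rintro ⟨k, hk⟩
        exact ⟨_, hk⟩
      · rintro ⟨a, ha⟩
        obtain ⟨n, hnl, hσ⟩ := sigmaFun_surj h1' hIDn h3' h4 a.1 a.2
        by_cases hnk : n < k'
        · refine ⟨⟨n, hnk⟩, ?_⟩
          show v ∈ G ⟨sigmaFun i' (I:ℕ) (D:ℕ) D'' n,
            sigmaFun_lt h1' hIDn h3' h4 n (lt_of_lt_of_le hnk hk'le)⟩
          rw [show (⟨sigmaFun i' (I:ℕ) (D:ℕ) D'' n,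
            sigmaFun_lt h1' hIDn h3' h4 n (lt_of_lt_of_le hnk hk'le)⟩ : Fin ℓ) = a from Fin.ext hσ]
          exact ha
        · exfalso
          rcases hcase with ⟨hk1, _⟩ | ⟨hk1, hdD, hD2'⟩
          · omega
          · have hn' : n = D'' := by omega
            have haD : a = D := by
              refine Fin.ext ?_
              rw [← hσ, hn', sigmaFun_atD2 h1' hIDn h3']
            have : (G D).card = 0 := by
              rw [hGcard D, if_neg (by omega), if_pos rfl]
              omega
            rw [Finset.card_eq_zero] at this
            rw [haD, this] at ha
            exact absurd ha (Finset.notMem_empty v)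
    · intro k
      rw [hP]
      exact hli _
    · intro a b hab
      rw [hPcard a, hPcard b]
      have hmono' : Antitone (eFun d i' (I:ℕ) (D:ℕ) D'') :=
        antitone_nat_of_succ_le
          (eFun_antitone d i' (I:ℕ) (D:ℕ) D'' h1' hIDn h3' hanti hbefore hrI hrD hafter)
      exact hmono' hab
  have hlex := hmax k' P hPpart
  refine lex_contra (n := i') ?_ ?_ hlex
  · intro mm hmm
    rw [hPS mm, eFun_lt d i' (I:ℕ) (D:ℕ) D'' mm hmm]
  · rw [hPS i', eFun_i' d i' (I:ℕ) (D:ℕ) D'' h1' hIDn h3']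
    omega

/-- In a fundamental partition the spans of the parts form a decreasing chain. -/
lemma spanF_antitone {K V : Type*} [Field K] [AddCommGroup V] [Module K V]
    {M ℓ : ℕ} {φ : Fin M → V} {Ω : Finset (Fin M)} {F : Fin ℓ → Finset (Fin M)}
    (hF : IsFundamentalOn K φ Ω F) (i j : Fin ℓ) (hij : i ≤ j) :
    Submodule.span K (φ '' ↑(F j)) ≤ Submodule.span K (φ '' ↑(F i)) := by
  rcases eq_or_lt_of_le hij with rfl | hlt
  · exact le_rfl
  rw [Submodule.span_le]
  rintro _ ⟨x, hx, rfl⟩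
  have hxj : x ∈ F j := by exact_mod_cast hx
  by_contra hxi
  rw [SetLike.mem_coe] at hxi
  obtain ⟨⟨hne, hdj, hcov, hliF, hmono⟩, hmax⟩ := id hF
  have hxFi : x ∉ F i := fun h => hxi (mem_sp φ h)
  have hij' : i ≠ j := ne_of_lt hlt
  set G : Fin ℓ → Finset (Fin M) := fun a =>
    if a = i then insert x (F i) else if a = j then (F j).erase x else F a with hG
  have hGdef : ∀ a, G a =
      if a = i then insert x (F i) else if a = j then (F j).erase x else F a :=
    fun a => by rw [hG]
  have hGmem : ∀ (v : Fin M) (a : Fin ℓ),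
      v ∈ G a ↔ ((v ∈ F a ∧ v ≠ x) ∨ (v = x ∧ a = i)) := by
    intro v a
    rw [hGdef a]
    by_cases ha : a = i
    · rw [if_pos ha]
      constructor
      · intro hv
        rcases Finset.mem_insert.mp hv with hv1 | hv'
        · exact Or.inr ⟨hv1, ha⟩
        · exact Or.inl ⟨ha ▸ hv', fun hvx => hxFi (hvx ▸ hv')⟩
      · rintro (⟨hv, _⟩ | ⟨hvx2, _⟩)
        · exact Finset.mem_insert_of_mem (ha ▸ hv)
        · rw [hvx2]
          exact Finset.mem_insert_self x _
    · rw [if_neg ha]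
      by_cases haj : a = j
      · rw [if_pos haj]
        rw [Finset.mem_erase]
        constructor
        · rintro ⟨h1, h2⟩; exact Or.inl ⟨haj ▸ h2, h1⟩
        · rintro (⟨h1, h2⟩ | ⟨rfl, h2⟩)
          · exact ⟨h2, haj ▸ h1⟩
          · exact absurd h2 ha
      · rw [if_neg haj]
        constructor
        · intro hv
          refine Or.inl ⟨hv, fun hvx => ?_⟩
          subst hvx
          exact (Finset.disjoint_left.mp (hdj a j haj)) hv hxj
        · rintro (⟨hv, _⟩ | ⟨rfl, h2⟩)
          · exact hv
          · exact absurd h2 ha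
  refine no_improving_exchange hF G i j hlt ?_ ?_ ?_ ?_
  · intro a b hab
    rw [Finset.disjoint_left]
    intro v hva hvb
    rw [hGmem] at hva hvb
    rcases hva with ⟨h1, h2⟩ | ⟨rfl, rfl⟩ <;> rcases hvb with ⟨h3, h4⟩ | ⟨h5, h6⟩
    · exact (Finset.disjoint_left.mp (hdj a b hab)) h1 h3
    · exact h2 h5
    · exact h4 rfl
    · exact hab (h6 ▸ rfl)
  · rw [← hcov]
    ext v
    simp only [Finset.mem_biUnion, Finset.mem_univ, true_and]
    constructor
    · rintro ⟨a, ha⟩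
      rw [hGmem] at ha
      rcases ha with ⟨h1, _⟩ | ⟨rfl, _⟩
      · exact ⟨a, h1⟩
      · exact ⟨j, hxj⟩
    · rintro ⟨a, ha⟩
      by_cases hvx : v = x
      · exact ⟨i, (hGmem v i).mpr (Or.inr ⟨hvx, rfl⟩)⟩
      · exact ⟨a, (hGmem v a).mpr (Or.inl ⟨ha, hvx⟩)⟩
  · intro a
    show LIon K φ (G a)
    rw [hGdef a]
    by_cases ha : a = i
    · rw [if_pos ha]
      exact LIon.insert (hliF i) hxi
    · rw [if_neg ha]
      by_cases haj : a = j
      · rw [if_pos haj]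
        exact LIon.subset (hliF j) (Finset.erase_subset x (F j))
      · rw [if_neg haj]
        exact hliF a
  · intro a
    rw [hGdef a]
    by_cases ha : a = i
    · rw [if_pos ha, if_pos ha, if_neg (ha ▸ hij'), Finset.card_insert_of_notMem hxFi, ha]
    · rw [if_neg ha, if_neg ha]
      by_cases haj : a = j
      · rw [if_pos haj, if_pos haj, Finset.card_erase_of_mem hxj, haj]
        have hpos : 0 < (F j).card := Finset.card_pos.mpr ⟨x, hxj⟩
        omega
      · rw [if_neg haj, if_neg haj]

/-- Let `{F_1,…,F_ℓ}` be a fundamental partition of `Φ`, pick `φ_m ∈ F_ℓ`, let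
`S₁ ⊆ F_{ℓ-1}` be a smallest subset with `φ_m ∈ span(S₁)`, fix `j ≤ ℓ-1`, and
let `S_j ⊆ F_j` be a smallest subset with `span(S₁) ⊆ span(S_j)`.  Then
`span(S_j) ⊆ span(F_i)` for all `i = 1,…,ℓ-1`.  (Indices here are 0-based:
`F ⟨ℓ-1,_⟩` is the last part, `F ⟨ℓ-2,_⟩` the second-to-last.) -/
theorem span_of_minimal_subsets_le {K V : Type*} [Field K] [AddCommGroup V] [Module K V]
    {M ℓ : ℕ} (hℓ : 2 ≤ ℓ) (φ : Fin M → V) (F : Fin ℓ → Finset (Fin M))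
    (hF : IsFundamentalOn K φ Finset.univ F)
    (m : Fin M) (hm : m ∈ F ⟨ℓ - 1, by omega⟩)
    (S₁ : Finset (Fin M)) (hS₁sub : S₁ ⊆ F ⟨ℓ - 2, by omega⟩)
    (hS₁mem : φ m ∈ Submodule.span K (φ '' ↑S₁))
    (hS₁min : ∀ S' ⊆ F ⟨ℓ - 2, by omega⟩,
      φ m ∈ Submodule.span K (φ '' ↑S') → S₁.card ≤ S'.card)
    (j : Fin ℓ) (hj : (j : ℕ) ≤ ℓ - 2)
    (Sj : Finset (Fin M)) (hSjsub : Sj ⊆ F j)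
    (hSjspan : Submodule.span K (φ '' ↑S₁) ≤ Submodule.span K (φ '' ↑Sj))
    (hSjmin : ∀ S' ⊆ F j,
      Submodule.span K (φ '' ↑S₁) ≤ Submodule.span K (φ '' ↑S') → Sj.card ≤ S'.card) :
    ∀ i : Fin ℓ, (i : ℕ) ≤ ℓ - 2 →
      Submodule.span K (φ '' ↑Sj) ≤ Submodule.span K (φ '' ↑(F i)) := by
  intro i hi
  obtain ⟨⟨hne, hdj, hcov, hliF, hmono⟩, hmax⟩ := id hF
  have hL2lt : ℓ - 2 < ℓ := by omega
  have hL1lt : ℓ - 1 < ℓ := by omega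
  rcases le_or_gt (i : ℕ) (j : ℕ) with hij | hij
  · exact le_trans (sp_mono φ hSjsub) (spanF_antitone hF i j (Fin.le_def.mpr hij))
  · rw [Submodule.span_le]
    rintro _ ⟨x, hx, rfl⟩
    have hxSj : x ∈ Sj := by exact_mod_cast hx
    rw [SetLike.mem_coe]
    by_contra hxi
    have hxFj : x ∈ F j := hSjsub hxSj
    have hjL2 : (j : ℕ) < ℓ - 2 := by omega
    have hdisjFF : ∀ {v : Fin M} {a b : Fin ℓ}, a ≠ b → v ∈ F a → v ∈ F b → False :=
      fun hab h1 h2 => Finset.disjoint_left.mp (hdj _ _ hab) h1 h2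
    have hne_ji : j ≠ i := Fin.ne_of_val_ne (show (j : ℕ) ≠ (i : ℕ) by omega)
    have hne_jL2 : j ≠ ⟨ℓ - 2, hL2lt⟩ := Fin.ne_of_val_ne (show (j : ℕ) ≠ ℓ - 2 by omega)
    have hne_jL1 : j ≠ ⟨ℓ - 1, hL1lt⟩ := Fin.ne_of_val_ne (show (j : ℕ) ≠ ℓ - 1 by omega)
    have hxNotFi : x ∉ F i := fun h => hxi (mem_sp φ h)
    -- find s ∈ S₁ with φ s ∉ span (F j \ {x})
    have hexs : ∃ s ∈ S₁, φ s ∉ Submodule.span K (φ '' ↑((F j).erase x)) := by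
      by_contra hall
      push_neg at hall
      have h1 : Submodule.span K (φ '' ↑S₁) ≤ Submodule.span K (φ '' ↑((F j).erase x)) := by
        rw [Submodule.span_le]
        rintro _ ⟨s, hs, rfl⟩
        rw [SetLike.mem_coe]
        exact hall s (by exact_mod_cast hs)
      have h3 := sp_inter (hliF j) (Finset.erase_subset x (F j)) hSjsub
      have h4 : (F j).erase x ∩ Sj = Sj.erase x := by
        ext v
        simp only [Finset.mem_inter, Finset.mem_erase]
        constructor
        · rintro ⟨⟨hvx, _⟩, hvSj⟩; exact ⟨hvx, hvSj⟩
        · rintro ⟨hvx, hvSj⟩; exact ⟨⟨hvx, hSjsub hvSj⟩, hvSj⟩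
      have h5 := hSjmin (Sj.erase x) ((Finset.erase_subset x Sj).trans hSjsub)
        (le_trans (le_inf h1 hSjspan) (le_of_le_of_eq h3 (by rw [h4])))
      have h6 := Finset.card_erase_of_mem hxSj
      have hpos : 0 < Sj.card := Finset.card_pos.mpr ⟨x, hxSj⟩
      omega
    obtain ⟨s, hsS₁, hs⟩ := hexs
    have hsL2 : s ∈ F ⟨ℓ - 2, hL2lt⟩ := hS₁sub hsS₁
    have hsNotFj : s ∉ F j := fun h => hdisjFF hne_jL2 h hsL2
    have hxNotL2 : x ∉ F ⟨ℓ - 2, hL2lt⟩ := fun h => hdisjFF hne_jL2 hxFj h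
    have hxs : x ≠ s := fun h => hsNotFj (h ▸ hxFj)
    have hsNotErase : s ∉ (F j).erase x := fun h => hsNotFj (Finset.mem_of_mem_erase h)
    rcases eq_or_lt_of_le hi with hieq | hilt
    · -- case i = ℓ - 2 : swap x and s, then use the span chain of the new partition
      have hiL2 : i = ⟨ℓ - 2, hL2lt⟩ := Fin.ext hieq
      rw [hiL2] at hxi hxNotFi
      set G : Fin ℓ → Finset (Fin M) := fun a =>
        if a = j then insert s ((F j).erase x)
        else if a = ⟨ℓ - 2, hL2lt⟩ then insert x ((F ⟨ℓ - 2, hL2lt⟩).erase s)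
        else F a with hG
      have hGdef : ∀ a, G a =
          if a = j then insert s ((F j).erase x)
          else if a = ⟨ℓ - 2, hL2lt⟩ then insert x ((F ⟨ℓ - 2, hL2lt⟩).erase s)
          else F a := fun a => by rw [hG]
      have hGmem : ∀ (v : Fin M) (a : Fin ℓ), v ∈ G a ↔
          ((v ∈ F a ∧ v ≠ x ∧ v ≠ s) ∨ (v = s ∧ a = j) ∨ (v = x ∧ a = ⟨ℓ - 2, hL2lt⟩)) := by
        intro v a
        rw [hGdef a]
        by_cases haj : a = j
        · rw [if_pos haj]
          rw [Finset.mem_insert, Finset.mem_erase]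
          constructor
          · rintro (hv1 | ⟨hv2, hv3⟩)
            · exact Or.inr (Or.inl ⟨hv1, haj⟩)
            · refine Or.inl ⟨haj ▸ hv3, hv2, fun hvs => hsNotFj (hvs ▸ hv3)⟩
          · rintro (⟨h1, h2, _⟩ | ⟨h1, _⟩ | ⟨h1, h2⟩)
            · exact Or.inr ⟨h2, haj ▸ h1⟩
            · exact Or.inl h1
            · exact absurd (haj ▸ h2 : (j : Fin ℓ) = ⟨ℓ - 2, hL2lt⟩) hne_jL2
        · rw [if_neg haj]
          by_cases haL : a = ⟨ℓ - 2, hL2lt⟩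
          · rw [if_pos haL]
            rw [Finset.mem_insert, Finset.mem_erase]
            constructor
            · rintro (hv1 | ⟨hv2, hv3⟩)
              · exact Or.inr (Or.inr ⟨hv1, haL⟩)
              · exact Or.inl ⟨haL ▸ hv3, fun hvx => hxNotL2 (hvx ▸ hv3), hv2⟩
            · rintro (⟨h1, _, h3⟩ | ⟨h1, h2⟩ | ⟨h1, _⟩)
              · exact Or.inr ⟨h3, haL ▸ h1⟩
              · exact absurd h2 haj
              · exact Or.inl h1
          · rw [if_neg haL]
            constructor
            · intro hv
              refine Or.inl ⟨hv, fun hvx => hdisjFF haj (hvx ▸ hv) hxFj,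
                fun hvs => hdisjFF haL (hvs ▸ hv) hsL2⟩
            · rintro (⟨h1, _, _⟩ | ⟨h1, h2⟩ | ⟨h1, h2⟩)
              · exact h1
              · exact absurd h2 haj
              · exact absurd h2 haL
      have hGcardeq : ∀ a, (G a).card = (F a).card := by
        intro a
        rw [hGdef a]
        by_cases haj : a = j
        · rw [if_pos haj, Finset.card_insert_of_notMem hsNotErase,
            Finset.card_erase_of_mem hxFj, haj]
          have : 0 < (F j).card := Finset.card_pos.mpr ⟨x, hxFj⟩
          omega
        · rw [if_neg haj]
          by_cases haL : a = ⟨ℓ - 2, hL2lt⟩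
          · rw [if_pos haL,
              Finset.card_insert_of_notMem (fun h => hxNotL2 (Finset.mem_of_mem_erase h)),
              Finset.card_erase_of_mem hsL2, haL]
            have : 0 < (F ⟨ℓ - 2, hL2lt⟩).card := Finset.card_pos.mpr ⟨s, hsL2⟩
            omega
          · rw [if_neg haL]
      have hGpart : IsOrderedLIPartitionOn K φ Finset.univ G := by
        refine ⟨?_, ?_, ?_, ?_, ?_⟩
        · intro a
          rw [← Finset.card_pos, hGcardeq a, Finset.card_pos]
          exact hne a
        · intro a b hab
          rw [Finset.disjoint_left]
          intro v hva hvb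
          rw [hGmem] at hva hvb
          rcases hva with ⟨h1, h2, h3⟩ | ⟨h1, h2⟩ | ⟨h1, h2⟩ <;>
            rcases hvb with ⟨g1, g2, g3⟩ | ⟨g1, g2⟩ | ⟨g1, g2⟩
          · exact hdisjFF hab h1 g1
          · exact h3 g1
          · exact h2 g1
          · exact g3 h1
          · exact hab (h2.trans g2.symm)
          · exact hxs (g1.symm.trans h1)
          · exact g2 h1
          · exact hxs (h1.symm.trans g1)
          · exact hab (h2.trans g2.symm)
        · rw [Finset.eq_univ_iff_forall]
          intro v
          rw [Finset.mem_biUnion]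
          by_cases hvx : v = x
          · exact ⟨⟨ℓ - 2, hL2lt⟩, Finset.mem_univ _,
              (hGmem v _).mpr (Or.inr (Or.inr ⟨hvx, rfl⟩))⟩
          by_cases hvs : v = s
          · exact ⟨j, Finset.mem_univ _, (hGmem v _).mpr (Or.inr (Or.inl ⟨hvs, rfl⟩))⟩
          obtain ⟨a, _, ha⟩ := Finset.mem_biUnion.mp (hcov ▸ Finset.mem_univ v)
          exact ⟨a, Finset.mem_univ _, (hGmem v a).mpr (Or.inl ⟨ha, hvx, hvs⟩)⟩
        · intro a
          show LIon K φ (G a)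
          rw [hGdef a]
          by_cases haj : a = j
          · rw [if_pos haj]
            exact LIon.insert (LIon.subset (hliF j) (Finset.erase_subset x (F j))) hs
          · rw [if_neg haj]
            by_cases haL : a = ⟨ℓ - 2, hL2lt⟩
            · rw [if_pos haL]
              refine LIon.insert
                (LIon.subset (hliF ⟨ℓ - 2, hL2lt⟩) (Finset.erase_subset s _)) ?_
              exact fun h => hxi (sp_mono φ (Finset.erase_subset s _) h)
            · rw [if_neg haL]
              exact hliF a
        · intro a b hab
          rw [hGcardeq a, hGcardeq b]
          exact hmono a b hab
      have hPSeq : PartSizes G = PartSizes F := by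
        funext n
        unfold PartSizes
        by_cases h : n < ℓ
        · rw [dif_pos h, dif_pos h, hGcardeq]
        · rw [dif_neg h, dif_neg h]
      have hGfund : IsFundamentalOn K φ Finset.univ G := by
        refine ⟨hGpart, fun k P hP => ?_⟩
        rw [hPSeq]
        exact hmax k P hP
      have hchain := spanF_antitone hGfund ⟨ℓ - 2, hL2lt⟩ ⟨ℓ - 1, hL1lt⟩
        (Fin.mk_le_mk.mpr (by omega))
      have hmG : m ∈ G ⟨ℓ - 1, hL1lt⟩ := by
        rw [hGdef]
        rw [if_neg (fun h => hne_jL1 h.symm),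
          if_neg (Fin.ne_of_val_ne (show ℓ - 1 ≠ ℓ - 2 by omega))]
        exact hm
      have hφm2 : φ m ∈ Submodule.span K (φ '' ↑(G ⟨ℓ - 2, hL2lt⟩)) := hchain (mem_sp φ hmG)
      have hGL2 : G ⟨ℓ - 2, hL2lt⟩ = insert x ((F ⟨ℓ - 2, hL2lt⟩).erase s) := by
        rw [hGdef, if_neg (fun h => hne_jL2 h.symm), if_pos rfl]
      rw [hGL2, Finset.coe_insert, Set.image_insert_eq] at hφm2
      by_cases hmer : φ m ∈ Submodule.span K (φ '' ↑((F ⟨ℓ - 2, hL2lt⟩).erase s))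
      · -- then φ m ∈ span (S₁ \ {s}), contradicting minimality of S₁
        have h3 := sp_inter (hliF ⟨ℓ - 2, hL2lt⟩) (Finset.erase_subset s _) hS₁sub
        have h4 : (F ⟨ℓ - 2, hL2lt⟩).erase s ∩ S₁ = S₁.erase s := by
          ext v
          simp only [Finset.mem_inter, Finset.mem_erase]
          constructor
          · rintro ⟨⟨hvs, _⟩, hvS⟩; exact ⟨hvs, hvS⟩
          · rintro ⟨hvs, hvS⟩; exact ⟨⟨hvs, hS₁sub hvS⟩, hvS⟩
        have hm2 : φ m ∈ Submodule.span K (φ '' ↑(S₁.erase s)) := by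
          have := h3 ⟨hmer, hS₁mem⟩
          rwa [h4] at this
        have h5 := hS₁min (S₁.erase s) ((Finset.erase_subset s S₁).trans hS₁sub) hm2
        have h6 := Finset.card_erase_of_mem hsS₁
        have hpos : 0 < S₁.card := Finset.card_pos.mpr ⟨s, hsS₁⟩
        omega
      · have hex2 := mem_span_insert_exchange hφm2 hmer
        refine hxi ?_
        have hle : Submodule.span K
            (Insert.insert (φ m) (φ '' ↑((F ⟨ℓ - 2, hL2lt⟩).erase s))) ≤
            Submodule.span K (φ '' ↑(F ⟨ℓ - 2, hL2lt⟩)) := by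
          rw [Submodule.span_le]
          intro w hw
          rcases Set.mem_insert_iff.mp hw with hw1 | hw'
          · rw [SetLike.mem_coe, hw1]
            exact sp_mono φ hS₁sub hS₁mem
          · exact Submodule.subset_span
              (Set.image_mono (f := φ) (by exact_mod_cast Finset.erase_subset s _) hw')
        exact hle hex2
    · -- case i < ℓ - 2 : improving exchange, contradiction with fundamentality
      have hne_iL2 : i ≠ ⟨ℓ - 2, hL2lt⟩ := Fin.ne_of_val_ne (show (i : ℕ) ≠ ℓ - 2 by omega)
      have hne_ij : i ≠ j := fun h => hne_ji h.symm
      set G : Fin ℓ → Finset (Fin M) := fun a =>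
        if a = i then insert x (F i)
        else if a = j then insert s ((F j).erase x)
        else if a = ⟨ℓ - 2, hL2lt⟩ then (F ⟨ℓ - 2, hL2lt⟩).erase s
        else F a with hG
      have hGdef : ∀ a, G a =
          if a = i then insert x (F i)
          else if a = j then insert s ((F j).erase x)
          else if a = ⟨ℓ - 2, hL2lt⟩ then (F ⟨ℓ - 2, hL2lt⟩).erase s
          else F a := fun a => by rw [hG]
      have hGmem : ∀ (v : Fin M) (a : Fin ℓ), v ∈ G a ↔
          ((v ∈ F a ∧ v ≠ x ∧ v ≠ s) ∨ (v = x ∧ a = i) ∨ (v = s ∧ a = j)) := by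
        intro v a
        rw [hGdef a]
        by_cases hai : a = i
        · rw [if_pos hai]
          rw [Finset.mem_insert]
          constructor
          · rintro (hv1 | hv2)
            · exact Or.inr (Or.inl ⟨hv1, hai⟩)
            · exact Or.inl ⟨hai ▸ hv2, fun hvx => hxNotFi (hvx ▸ hv2),
                fun hvs => hdisjFF hne_iL2 (hvs ▸ hv2) hsL2⟩
          · rintro (⟨h1, _, _⟩ | ⟨h1, _⟩ | ⟨h1, h2⟩)
            · exact Or.inr (hai ▸ h1)
            · exact Or.inl h1
            · exact absurd (hai ▸ h2 : (i : Fin ℓ) = j) hne_ij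
        · rw [if_neg hai]
          by_cases haj : a = j
          · rw [if_pos haj]
            rw [Finset.mem_insert, Finset.mem_erase]
            constructor
            · rintro (hv1 | ⟨hv2, hv3⟩)
              · exact Or.inr (Or.inr ⟨hv1, haj⟩)
              · exact Or.inl ⟨haj ▸ hv3, hv2, fun hvs => hsNotFj (hvs ▸ hv3)⟩
            · rintro (⟨h1, h2, _⟩ | ⟨h1, h2⟩ | ⟨h1, _⟩)
              · exact Or.inr ⟨h2, haj ▸ h1⟩
              · exact absurd h2 hai
              · exact Or.inl h1
          · rw [if_neg haj]
            by_cases haL : a = ⟨ℓ - 2, hL2lt⟩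
            · rw [if_pos haL]
              rw [Finset.mem_erase]
              constructor
              · rintro ⟨hv1, hv2⟩
                exact Or.inl ⟨haL ▸ hv2, fun hvx => hxNotL2 (hvx ▸ hv2), hv1⟩
              · rintro (⟨h1, _, h3⟩ | ⟨h1, h2⟩ | ⟨h1, h2⟩)
                · exact ⟨h3, haL ▸ h1⟩
                · exact absurd h2 hai
                · exact absurd h2 haj
            · rw [if_neg haL]
              constructor
              · intro hv
                exact Or.inl ⟨hv, fun hvx => hdisjFF haj (hvx ▸ hv) hxFj,
                  fun hvs => hdisjFF haL (hvs ▸ hv) hsL2⟩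
              · rintro (⟨h1, _, _⟩ | ⟨h1, h2⟩ | ⟨h1, h2⟩)
                · exact h1
                · exact absurd h2 hai
                · exact absurd h2 haj
      refine no_improving_exchange hF G i ⟨ℓ - 2, hL2lt⟩ (Fin.lt_def.mpr hilt) ?_ ?_ ?_ ?_
      · intro a b hab
        rw [Finset.disjoint_left]
        intro v hva hvb
        rw [hGmem] at hva hvb
        rcases hva with ⟨h1, h2, h3⟩ | ⟨h1, h2⟩ | ⟨h1, h2⟩ <;>
          rcases hvb with ⟨g1, g2, g3⟩ | ⟨g1, g2⟩ | ⟨g1, g2⟩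
        · exact hdisjFF hab h1 g1
        · exact h2 g1
        · exact h3 g1
        · exact g2 h1
        · exact hab (h2.trans g2.symm)
        · exact hxs (h1.symm.trans g1)
        · exact g3 h1
        · exact hxs (g1.symm.trans h1)
        · exact hab (h2.trans g2.symm)
      · rw [Finset.eq_univ_iff_forall]
        intro v
        rw [Finset.mem_biUnion]
        by_cases hvx : v = x
        · exact ⟨i, Finset.mem_univ _, (hGmem v _).mpr (Or.inr (Or.inl ⟨hvx, rfl⟩))⟩
        by_cases hvs : v = s
        · exact ⟨j, Finset.mem_univ _, (hGmem v _).mpr (Or.inr (Or.inr ⟨hvs, rfl⟩))⟩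
        obtain ⟨a, _, ha⟩ := Finset.mem_biUnion.mp (hcov ▸ Finset.mem_univ v)
        exact ⟨a, Finset.mem_univ _, (hGmem v a).mpr (Or.inl ⟨ha, hvx, hvs⟩)⟩
      · intro a
        show LIon K φ (G a)
        rw [hGdef a]
        by_cases hai : a = i
        · rw [if_pos hai]
          exact LIon.insert (hliF i) hxi
        · rw [if_neg hai]
          by_cases haj : a = j
          · rw [if_pos haj]
            exact LIon.insert (LIon.subset (hliF j) (Finset.erase_subset x (F j))) hs
          · rw [if_neg haj]
            by_cases haL : a = ⟨ℓ - 2, hL2lt⟩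
            · rw [if_pos haL]
              exact LIon.subset (hliF ⟨ℓ - 2, hL2lt⟩) (Finset.erase_subset s _)
            · rw [if_neg haL]
              exact hliF a
      · intro a
        rw [hGdef a]
        by_cases hai : a = i
        · rw [if_pos hai, if_pos hai, if_neg (hai ▸ hne_iL2),
            Finset.card_insert_of_notMem (hai ▸ hxNotFi), hai]
        · rw [if_neg hai, if_neg hai]
          by_cases haj : a = j
          · rw [if_pos haj, if_neg (haj ▸ hne_jL2),
              Finset.card_insert_of_notMem (haj ▸ hsNotErase),
              Finset.card_erase_of_mem (haj ▸ hxFj), haj]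
            have : 0 < (F j).card := Finset.card_pos.mpr ⟨x, hxFj⟩
            omega
          · rw [if_neg haj]
            by_cases haL : a = ⟨ℓ - 2, hL2lt⟩
            · rw [if_pos haL, if_pos haL, Finset.card_erase_of_mem (haL ▸ hsL2), haL]
              have : 0 < (F ⟨ℓ - 2, hL2lt⟩).card := Finset.card_pos.mpr ⟨s, hsL2⟩
              omega
            · rw [if_neg haL, if_neg haL]
end
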